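/- arXiv:1605.01036 — 5 statements merged into one kernel-verified Lean document; each statement's English description precedes it below -/
import Mathlib

section
/- A matrix X ∈ ℂ^{N×m} is a global minimizer of E₀ if and only if its columns are orthonormal (X*X = I) and tr[X*HX] = λ₁ + λ₂ + ⋯ + λ_m, the sum of the m most negative eigenvalues of H. -/
set_option maxHeartbeats 1000000

open Matrix Polynomial
open scoped ComplexOrder

attribute [local instance] Matrix.frobeniusSeminormedAddCommGroup
  Matrix.frobeniusNormedAddCommGroup Matrix.frobeniusNormedSpace

/-- The OMM functional `E₀(X) = tr[(2I − X*X) X*HX]` (real-valued, since `H` is Hermitian). -/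
noncomputable def E0 {N m : ℕ} (H : Matrix (Fin N) (Fin N) ℂ)
    (X : Matrix (Fin N) (Fin m) ℂ) : ℝ :=
  (((2 : ℂ) • (1 : Matrix (Fin m) (Fin m) ℂ) - Xᴴ * X) * (Xᴴ * H * X)).trace.re


lemma charpoly_diagonal {N : ℕ} (d : Fin N → ℂ) :
    (Matrix.diagonal d).charpoly = ∏ i : Fin N, (X - C (d i)) := by
  have h : charmatrix (Matrix.diagonal d) = Matrix.diagonal (fun i => (X : ℂ[X]) - C (d i)) := by
    ext i j
    by_cases hij : i = j
    · subst hij; simp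
    · simp [Matrix.charmatrix_apply_ne _ _ _ hij, Matrix.diagonal_apply_ne _ hij,
        Matrix.diagonal_apply_ne' _ hij]
  rw [Matrix.charpoly, h, Matrix.det_diagonal]

lemma charpoly_conj_eq {N : ℕ} (U V D : Matrix (Fin N) (Fin N) ℂ)
    (hUV : U * V = 1) (hVU : V * U = 1) :
    (U * D * V).charpoly = D.charpoly := by
  classical
  set Cm : Matrix (Fin N) (Fin N) ℂ →+* Matrix (Fin N) (Fin N) ℂ[X] :=
    (C : ℂ →+* ℂ[X]).mapMatrix with hCm
  have hcomm : ∀ M : Matrix (Fin N) (Fin N) ℂ[X],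
      M * Matrix.scalar (Fin N) (X : ℂ[X]) = Matrix.scalar (Fin N) (X : ℂ[X]) * M :=
    fun M => ((Matrix.scalar_commute (X : ℂ[X]) (fun r' => Commute.all _ _) M)).symm
  have key : charmatrix (U * D * V) = Cm U * charmatrix D * Cm V := by
    unfold Matrix.charmatrix
    rw [Matrix.mul_sub, Matrix.sub_mul]
    congr 1
    · rw [Matrix.mul_assoc, ← hcomm (Cm V), ← Matrix.mul_assoc, ← map_mul Cm, hUV, map_one Cm,
        Matrix.one_mul]
    · rw [← map_mul Cm, ← map_mul Cm]
  have hdet : (Cm U).det * (Cm V).det = 1 := by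
    rw [← Matrix.det_mul, ← map_mul Cm, hUV, map_one Cm, Matrix.det_one]
  rw [Matrix.charpoly, key, Matrix.det_mul, Matrix.det_mul, Matrix.charpoly]
  ring_nf
  linear_combination D.charmatrix.det * hdet


lemma exists_perm_of_prod_eq {N : ℕ} (lam eig : Fin N → ℝ) (hmono : Monotone lam)
    (h : (∏ i : Fin N, (X - C ((lam i : ℂ)))) = ∏ i : Fin N, (X - C ((eig i : ℂ)))) :
    ∃ σ : Equiv.Perm (Fin N), ∀ i, eig i = lam (σ i) := by
  classical
  -- multisets of complex roots agree
  have hms : (Finset.univ.val.map fun i => ((lam i : ℂ))) =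
      (Finset.univ.val.map fun i => ((eig i : ℂ))) := by
    have h1 := congrArg Polynomial.roots h
    have e : ∀ f : Fin N → ℝ, Multiset.map (fun i => X - C ((f i : ℂ))) Finset.univ.val =
        Multiset.map (fun a : ℂ => X - C a) (Finset.univ.val.map fun i => ((f i : ℂ))) := by
      intro f; rw [Multiset.map_map]; rfl
    rwa [Finset.prod_eq_multiset_prod, Finset.prod_eq_multiset_prod, e lam, e eig,
      roots_multiset_prod_X_sub_C, roots_multiset_prod_X_sub_C] at h1
  -- real multisets agree
  have hmr : (Finset.univ.val.map lam) = (Finset.univ.val.map eig) := by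
    apply Multiset.map_injective (f := (fun r : ℝ => (r : ℂ))) Complex.ofReal_injective
    rwa [Multiset.map_map, Multiset.map_map]
  -- lists
  have hperm : (List.ofFn (eig ∘ (Tuple.sort eig))).Perm (List.ofFn lam) := by
    rw [← Multiset.coe_eq_coe]
    have h1 : ((List.ofFn (eig ∘ (Tuple.sort eig))) : Multiset ℝ) = ((List.ofFn eig) : Multiset ℝ) := by
      rw [Multiset.coe_eq_coe]
      exact Equiv.Perm.ofFn_comp_perm (Tuple.sort eig) eig
    rw [h1, ← Fin.univ_val_map, ← Fin.univ_val_map, hmr]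
  have hsorted : List.ofFn (eig ∘ (Tuple.sort eig)) = List.ofFn lam :=
    List.Perm.eq_of_sortedLE
      (List.sortedLE_ofFn_iff.2 (Tuple.monotone_sort eig))
      (List.sortedLE_ofFn_iff.2 hmono) hperm
  have heq : eig ∘ (Tuple.sort eig) = lam := List.ofFn_injective hsorted
  refine ⟨(Tuple.sort eig).symm, fun i => ?_⟩
  conv_lhs => rw [← (Tuple.sort eig).apply_symm_apply i]
  exact congrFun heq.symm ((Tuple.sort eig).symm i) ▸ rfl

lemma scalar_key {N m : ℕ} (hm : 0 < m) (hmN : m ≤ N) (lam : Fin N → ℝ)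
    (hmono : Monotone lam) (hneg : ∀ i, lam i < 0)
    (q t : Fin N → ℝ) (hqt : ∀ i, q i ≤ t i) (ht0 : ∀ i, 0 ≤ t i) (ht1 : ∀ i, t i ≤ 1)
    (htsum : ∑ i, t i ≤ (m : ℝ)) :
    (∑ k : Fin m, lam (Fin.castLE hmN k)) ≤ ∑ i, lam i * q i ∧
    ((∑ i, lam i * q i) = (∑ k : Fin m, lam (Fin.castLE hmN k)) → (∑ i, q i) = m) := by
  classical
  set Sm : Finset (Fin N) := Finset.univ.filter (fun i : Fin N => (i : ℕ) < m) with hSm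
  have h0 : ∀ f : Fin N → ℝ, ∑ k : Fin m, f (Fin.castLE hmN k) = ∑ i ∈ Sm, f i := by
    intro f
    refine Finset.sum_bij' (fun k _ => Fin.castLE hmN k)
      (fun i hi => ⟨(i : ℕ), by simpa [hSm] using hi⟩) ?_ ?_ ?_ ?_ ?_
    · intro a ha; simp [hSm]
    · intro a ha; simp
    · intro a ha; simp
    · intro a ha; ext; simp
    · intro a ha; rfl
  have hcard : ((Sm.card : ℝ)) = m := by
    have := h0 (fun _ => (1 : ℝ))
    simpa using this.symm
  have hm1N : m - 1 < N := by omega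
  set c : ℝ := lam ⟨m - 1, hm1N⟩ with hc
  have hc0 : c < 0 := hneg _
  have hcle : ∀ i : Fin N, (i : ℕ) < m → lam i ≤ c := by
    intro i hi; exact hmono (by simp [Fin.le_def]; omega)
  have hcge : ∀ i : Fin N, m ≤ (i : ℕ) → c ≤ lam i := by
    intro i hi; exact hmono (by simp [Fin.le_def]; omega)
  set g : Fin N → ℝ := fun i => (lam i - c) * t i - (if (i : ℕ) < m then lam i - c else 0)
    with hg
  have hg0 : ∀ i, 0 ≤ g i := by
    intro i
    by_cases hi : (i : ℕ) < m
    · have h1 := hcle i hi; have h2 := ht1 i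
      simp only [hg, hi, if_true]
      nlinarith
    · have h1 := hcge i (le_of_not_gt hi); have h2 := ht0 i
      simp only [hg, hi, if_false]
      nlinarith
  have key_id : ∑ i, g i =
      (∑ i, lam i * t i) - c * (∑ i, t i) - (∑ k : Fin m, lam (Fin.castLE hmN k)) + m * c := by
    rw [h0 lam]
    have e1 : ∑ i, (lam i - c) * t i = (∑ i, lam i * t i) - c * ∑ i, t i := by
      rw [Finset.mul_sum, ← Finset.sum_sub_distrib]
      exact Finset.sum_congr rfl (by intros; ring)
    have e2 : (∑ i : Fin N, if (i : ℕ) < m then lam i - c else 0) = (∑ i ∈ Sm, lam i) - m * c := by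
      have e3 : (∑ i : Fin N, if (i : ℕ) < m then lam i - c else 0) = ∑ i ∈ Sm, (lam i - c) :=
        (Finset.sum_filter _ _).symm
      rw [e3, Finset.sum_sub_distrib, Finset.sum_const, nsmul_eq_mul, hcard]
    simp only [hg]
    rw [Finset.sum_sub_distrib, e1, e2]
    ring
  have hqt' : ∑ i, lam i * t i ≤ ∑ i, lam i * q i := by
    apply Finset.sum_le_sum
    intro i _
    nlinarith [hneg i, hqt i]
  have hslack : 0 ≤ c * ((∑ i, t i) - m) := by nlinarith
  have hsg : 0 ≤ ∑ i, g i := Finset.sum_nonneg fun i _ => hg0 i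
  constructor
  · nlinarith [key_id, hqt', hslack, hsg]
  · intro hEq
    have h1 : ∑ i, lam i * t i = ∑ i, lam i * q i := by nlinarith
    have h2 : (∑ i, t i) = m := by
      have : c * ((∑ i, t i) - m) = 0 := by nlinarith
      have := mul_eq_zero.1 this
      rcases this with h | h
      · exact absurd h (ne_of_lt hc0)
      · linarith
    have h3 : ∀ i ∈ Finset.univ, lam i * t i = lam i * q i := by
      rw [← Finset.sum_eq_sum_iff_of_le (fun i _ => by nlinarith [hneg i, hqt i] : ∀ i ∈ Finset.univ, lam i * t i ≤ lam i * q i)]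
      exact h1
    have h4 : ∀ i, q i = t i := by
      intro i
      have := h3 i (Finset.mem_univ i)
      exact (mul_left_cancel₀ (ne_of_lt (hneg i)) this.symm)
    rw [Finset.sum_congr rfl fun i _ => h4 i]
    exact h2

lemma psd_diag_re_nonneg {n : Type*} [Fintype n] [DecidableEq n]
    {A : Matrix n n ℂ} (hA : A.PosSemidef) (i : n) : 0 ≤ (A i i).re := by
  have h := hA.dotProduct_mulVec_nonneg (Pi.single i 1)
  have he : dotProduct (star (Pi.single i 1)) (A *ᵥ Pi.single i 1) = A i i := by
    simp [Matrix.mulVec_single, dotProduct, Pi.single_apply]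
  rw [he] at h
  exact (Complex.le_def.1 h).1

lemma E0_key {N m : ℕ} (hm : 0 < m) (hmN : m ≤ N)
    (H U : Matrix (Fin N) (Fin N) ℂ)
    (hU : U ∈ Matrix.unitaryGroup (Fin N) ℂ)
    (eig lam : Fin N → ℝ)
    (hspec : H = U * Matrix.diagonal (fun i => ((eig i : ℝ) : ℂ)) * Uᴴ)
    (σ : Equiv.Perm (Fin N)) (hσ : ∀ i, eig i = lam (σ i))
    (hmono : Monotone lam) (hneg : ∀ i, lam i < 0)
    (Y : Matrix (Fin N) (Fin m) ℂ) :
    (∑ k : Fin m, lam (Fin.castLE hmN k)) ≤ E0 H Y ∧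
    (E0 H Y = (∑ k : Fin m, lam (Fin.castLE hmN k)) → Yᴴ * Y = 1) := by
  classical
  have hUU' : U * Uᴴ = 1 := by
    have := Matrix.mem_unitaryGroup_iff.mp hU
    rwa [Matrix.star_eq_conjTranspose] at this
  set D : Matrix (Fin N) (Fin N) ℂ := Matrix.diagonal (fun i => ((eig i : ℝ) : ℂ)) with hD
  set Z : Matrix (Fin N) (Fin m) ℂ := Uᴴ * Y with hZdef
  set W : Matrix (Fin m) (Fin m) ℂ := Yᴴ * Y with hWdef
  have hZct : Zᴴ = Yᴴ * U := by
    rw [hZdef, Matrix.conjTranspose_mul, Matrix.conjTranspose_conjTranspose]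
  have hZZ : Zᴴ * Z = W := by
    rw [hZct, hZdef, Matrix.mul_assoc, ← Matrix.mul_assoc U Uᴴ Y, hUU', Matrix.one_mul, hWdef]
  have hHY : Yᴴ * H * Y = Zᴴ * D * Z := by
    rw [hspec, hZct, hZdef]
    simp only [Matrix.mul_assoc]
  set R : Matrix (Fin m) (Fin m) ℂ := (2 : ℂ) • (1 : Matrix (Fin m) (Fin m) ℂ) - W with hRdef
  set Q : Matrix (Fin N) (Fin N) ℂ := Z * R * Zᴴ with hQdef
  set q : Fin N → ℝ := fun i => (Q i i).re with hqdef
  -- E0 as a weighted sum of eigenvalues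
  have hE0 : E0 H Y = ∑ i, eig i * q i := by
    show (((2 : ℂ) • (1 : Matrix (Fin m) (Fin m) ℂ) - Yᴴ * Y) * (Yᴴ * H * Y)).trace.re = _
    rw [hHY]
    have h1 : ((2 : ℂ) • (1 : Matrix (Fin m) (Fin m) ℂ) - Yᴴ * Y) = R := rfl
    rw [h1]
    have htr : (R * (Zᴴ * D * Z)).trace = (Q * D).trace := by
      have e1 : R * (Zᴴ * D * Z) = (R * Zᴴ * D) * Z := by simp only [Matrix.mul_assoc]
      rw [e1, Matrix.trace_mul_comm, hQdef]
      congr 1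
      simp only [Matrix.mul_assoc]
    rw [htr]
    have h2 : (Q * D).trace = ∑ i, Q i i * ((eig i : ℝ) : ℂ) := by
      simp [Matrix.trace, Matrix.diag, Matrix.mul_diagonal, hD]
    rw [h2, Complex.re_sum]
    refine Finset.sum_congr rfl fun i _ => ?_
    simp [Complex.mul_re, hqdef]
    ring
  -- q i ≤ 1
  have hq1 : ∀ i, q i ≤ 1 := by
    intro i
    set P : Matrix (Fin N) (Fin N) ℂ := Z * Zᴴ with hPdef
    have hfact : (1 : Matrix (Fin N) (Fin N) ℂ) - Q = (1 - P)ᴴ * (1 - P) := by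
      have hPh : (1 - P)ᴴ = 1 - P := by
        rw [Matrix.conjTranspose_sub, Matrix.conjTranspose_one, hPdef,
          Matrix.conjTranspose_mul, Matrix.conjTranspose_conjTranspose]
      rw [hPh]
      rw [hQdef, hRdef, ← hZZ]
      have e1 : Z * ((2 : ℂ) • (1 : Matrix (Fin m) (Fin m) ℂ) - Zᴴ * Z) * Zᴴ
          = (2 : ℂ) • P - P * P := by
        rw [Matrix.mul_sub, Matrix.sub_mul]
        congr 1
        · rw [Matrix.mul_smul, Matrix.mul_one, Matrix.smul_mul, hPdef]
        · simp only [Matrix.mul_assoc, hPdef]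
      rw [e1, Matrix.sub_mul, Matrix.mul_sub, Matrix.mul_sub]
      simp only [Matrix.mul_one, Matrix.one_mul]
      module
    have hpsd : ((1 : Matrix (Fin N) (Fin N) ℂ) - Q).PosSemidef := by
      rw [hfact]; exact Matrix.posSemidef_conjTranspose_mul_self _
    have := psd_diag_re_nonneg hpsd i
    have he : ((1 : Matrix (Fin N) (Fin N) ℂ) - Q) i i = 1 - Q i i := by
      simp [Matrix.sub_apply, Matrix.one_apply_eq]
    rw [he] at this
    simp only [Complex.sub_re, Complex.one_re] at this
    simpa [hqdef] using by linarith
  -- spectral analysis of W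
  have hWpsd : W.PosSemidef := by rw [hWdef]; exact Matrix.posSemidef_conjTranspose_mul_self Y
  set hW : W.IsHermitian := hWpsd.isHermitian with hhW
  set ν : Fin m → ℝ := hW.eigenvalues with hν
  set V : Matrix (Fin m) (Fin m) ℂ := (hW.eigenvectorUnitary : Matrix (Fin m) (Fin m) ℂ) with hV
  have hν0 : ∀ j, 0 ≤ ν j := fun j => hWpsd.eigenvalues_nonneg j
  have hVV' : V * Vᴴ = 1 := by
    have := Matrix.mem_unitaryGroup_iff.mp hW.eigenvectorUnitary.2
    rwa [Matrix.star_eq_conjTranspose] at this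
  have hV'V : Vᴴ * V = 1 := by
    have := Matrix.mem_unitaryGroup_iff'.mp hW.eigenvectorUnitary.2
    rwa [Matrix.star_eq_conjTranspose] at this
  have hWspec : W = V * Matrix.diagonal (fun j => ((ν j : ℝ) : ℂ)) * Vᴴ := by
    have := hW.spectral_theorem
    rwa [Unitary.conjStarAlgAut_apply, Matrix.star_eq_conjTranspose] at this
  -- generic trace computation
  have htrVV : ∀ a b : Fin m → ℂ,
      ((V * Matrix.diagonal a * Vᴴ) * (V * Matrix.diagonal b * Vᴴ)).trace = ∑ j, a j * b j := by
    intro a b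
    have e1 : (V * Matrix.diagonal a * Vᴴ) * (V * Matrix.diagonal b * Vᴴ)
        = V * (Matrix.diagonal a * Matrix.diagonal b) * Vᴴ := by
      calc (V * Matrix.diagonal a * Vᴴ) * (V * Matrix.diagonal b * Vᴴ)
          = V * Matrix.diagonal a * (Vᴴ * V) * (Matrix.diagonal b * Vᴴ) := by
            simp only [Matrix.mul_assoc]
        _ = V * (Matrix.diagonal a * Matrix.diagonal b) * Vᴴ := by
            rw [hV'V, Matrix.mul_one]; simp only [Matrix.mul_assoc]
    rw [e1, Matrix.diagonal_mul_diagonal]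
    rw [Matrix.trace_mul_comm, ← Matrix.mul_assoc, hV'V, Matrix.one_mul, Matrix.trace_diagonal]
  have hRspec : R = V * Matrix.diagonal (fun j => ((2 - ν j : ℝ) : ℂ)) * Vᴴ := by
    have e1 : Matrix.diagonal (fun j : Fin m => ((2 - ν j : ℝ) : ℂ))
        = Matrix.diagonal (fun _ : Fin m => (2 : ℂ)) - Matrix.diagonal (fun j => ((ν j : ℝ) : ℂ)) := by
      rw [Matrix.diagonal_sub]
      congr 1; funext j; push_cast; ring
    rw [hRdef, e1, Matrix.mul_sub, Matrix.sub_mul, ← hWspec]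
    congr 1
    have e2 : Matrix.diagonal (fun _ : Fin m => (2 : ℂ)) = (2 : ℂ) • (1 : Matrix (Fin m) (Fin m) ℂ) := by
      rw [Matrix.smul_one_eq_diagonal]
    rw [e2, Matrix.mul_smul, Matrix.mul_one, Matrix.smul_mul, hVV']
  -- the positive part of R
  set dplus : Fin m → ℝ := fun j => max (2 - ν j) 0 with hdplus
  set Rplus : Matrix (Fin m) (Fin m) ℂ := V * Matrix.diagonal (fun j => ((dplus j : ℝ) : ℂ)) * Vᴴ
    with hRplusdef
  have hRplus_psd : Rplus.PosSemidef := by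
    refine Matrix.PosSemidef.mul_mul_conjTranspose_same ?_ V
    exact Matrix.posSemidef_diagonal_iff.2 fun j => Complex.zero_le_real.2 (le_max_right _ _)
  have hdiff_psd : (Rplus - R).PosSemidef := by
    have e1 : Rplus - R = V * Matrix.diagonal (fun j => ((dplus j - (2 - ν j) : ℝ) : ℂ)) * Vᴴ := by
      rw [hRplusdef, hRspec]
      have e2 : Matrix.diagonal (fun j : Fin m => ((dplus j - (2 - ν j) : ℝ) : ℂ))
          = Matrix.diagonal (fun j => ((dplus j : ℝ) : ℂ))
            - Matrix.diagonal (fun j => ((2 - ν j : ℝ) : ℂ)) := by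
        rw [Matrix.diagonal_sub]; congr 1; funext j; push_cast; ring
      rw [e2, Matrix.mul_sub, Matrix.sub_mul]
    rw [e1]
    refine Matrix.PosSemidef.mul_mul_conjTranspose_same ?_ V
    exact Matrix.posSemidef_diagonal_iff.2 fun j =>
      Complex.zero_le_real.2 (by simp [hdplus])
  have hZdiff_psd : (Z * Rplus * Zᴴ - Q).PosSemidef := by
    have e1 : Z * (Rplus - R) * Zᴴ = Z * Rplus * Zᴴ - Z * R * Zᴴ := by
      rw [Matrix.mul_sub, Matrix.sub_mul]
    rw [hQdef, ← e1]
    exact hdiff_psd.mul_mul_conjTranspose_same Z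
  have hZplus_psd : (Z * Rplus * Zᴴ).PosSemidef := hRplus_psd.mul_mul_conjTranspose_same Z
  set t : Fin N → ℝ := fun i => max (q i) 0 with htdef
  have ht_le : ∀ i, t i ≤ ((Z * Rplus * Zᴴ) i i).re := by
    intro i
    refine max_le ?_ (psd_diag_re_nonneg hZplus_psd i)
    have := psd_diag_re_nonneg hZdiff_psd i
    simp only [Matrix.sub_apply, Complex.sub_re] at this
    simp only [hqdef]
    linarith
  -- trace computations
  have htrW : ∀ a : Fin m → ℝ,
      ((V * Matrix.diagonal (fun j => ((a j : ℝ) : ℂ)) * Vᴴ) * W).trace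
        = ∑ j, ((a j * ν j : ℝ) : ℂ) := by
    intro a
    rw [hWspec, htrVV]
    push_cast
    rfl
  have htsum : ∑ i, t i ≤ (m : ℝ) := by
    have h1 : ∑ i, t i ≤ ∑ i, ((Z * Rplus * Zᴴ) i i).re :=
      Finset.sum_le_sum fun i _ => ht_le i
    have h2 : ∑ i, ((Z * Rplus * Zᴴ) i i).re = (Z * Rplus * Zᴴ).trace.re := by
      rw [Matrix.trace, Complex.re_sum]; rfl
    have h3 : (Z * Rplus * Zᴴ).trace = (Rplus * W).trace := by
      rw [Matrix.trace_mul_comm, ← Matrix.mul_assoc, hZZ, Matrix.trace_mul_comm]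
    have h4 : (Rplus * W).trace = ∑ j, ((dplus j * ν j : ℝ) : ℂ) := by
      rw [hRplusdef, htrW]
    have h5 : (Rplus * W).trace.re = ∑ j, dplus j * ν j := by
      rw [h4, ← Complex.ofReal_sum, Complex.ofReal_re]
    have h6 : ∀ j, dplus j * ν j ≤ 1 := by
      intro j
      rcases le_total (2 - ν j) 0 with h | h
      · rw [hdplus]; simp only [max_eq_right h]; nlinarith [hν0 j]
      · rw [hdplus]; simp only [max_eq_left h]; nlinarith [hν0 j, sq_nonneg (1 - ν j)]
    have h7 : ∑ j, dplus j * ν j ≤ (m : ℝ) := by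
      calc ∑ j, dplus j * ν j ≤ ∑ _j : Fin m, (1 : ℝ) := Finset.sum_le_sum fun j _ => h6 j
        _ = m := by simp
    rw [h2, h3, h5] at h1
    linarith
  -- apply the scalar lemma with permuted variables
  set q' : Fin N → ℝ := q ∘ σ.symm with hq'def
  set t' : Fin N → ℝ := t ∘ σ.symm with ht'def
  have hsum_eq : E0 H Y = ∑ i, lam i * q' i := by
    rw [hE0]
    have e1 : ∀ i, eig i * q i = lam (σ i) * q i := fun i => by rw [hσ i]
    rw [Finset.sum_congr rfl fun i _ => e1 i]
    rw [← Equiv.sum_comp σ (fun i => lam i * q' i)]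
    refine Finset.sum_congr rfl fun i _ => ?_
    simp [hq'def]
  have hsum_t' : ∑ i, t' i = ∑ i, t i := Equiv.sum_comp σ.symm t
  have hsum_q' : ∑ i, q' i = ∑ i, q i := Equiv.sum_comp σ.symm q
  have hkey := scalar_key hm hmN lam hmono hneg q' t'
    (fun i => le_max_left _ _) (fun i => le_max_right _ _)
    (fun i => max_le (hq1 _) zero_le_one)
    (by rw [hsum_t']; exact htsum)
  constructor
  · rw [hsum_eq]; exact hkey.1
  · intro hEq
    have hq_sum : ∑ i, q i = m := by
      rw [← hsum_q']
      exact hkey.2 (by rw [← hsum_eq]; exact hEq)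
    -- trace of Q equals sum of ν_j (2 - ν_j)
    have h3 : Q.trace = (R * W).trace := by
      rw [hQdef, Matrix.trace_mul_comm, ← Matrix.mul_assoc, hZZ, Matrix.trace_mul_comm]
    have h4 : (R * W).trace = ∑ j, (((2 - ν j) * ν j : ℝ) : ℂ) := by
      rw [hRspec, htrW]
    have h5 : Q.trace.re = ∑ i, q i := by
      rw [Matrix.trace, Complex.re_sum]; rfl
    have h6 : ∑ j, (2 - ν j) * ν j = (m : ℝ) := by
      have := congrArg Complex.re (h3.trans h4)
      rw [h5, hq_sum, ← Complex.ofReal_sum, Complex.ofReal_re] at this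
      exact this.symm
    -- each ν j = 1
    have h7 : ∀ j, ν j = 1 := by
      have h8 : ∑ j, (1 - (2 - ν j) * ν j) = 0 := by
        rw [Finset.sum_sub_distrib]
        simp [h6]
      have h9 : ∀ j ∈ Finset.univ, (0:ℝ) ≤ 1 - (2 - ν j) * ν j := by
        intro j _; nlinarith [sq_nonneg (1 - ν j)]
      have h10 := (Finset.sum_eq_zero_iff_of_nonneg h9).1 h8
      intro j
      have := h10 j (Finset.mem_univ j)
      nlinarith [sq_nonneg (1 - ν j)]
    have hWone : W = 1 := by
      rw [hWspec]
      have : (fun j : Fin m => ((ν j : ℝ) : ℂ)) = fun _ => (1 : ℂ) := by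
        funext j; rw [h7 j]; norm_num
      rw [this, Matrix.diagonal_one, Matrix.mul_one, hVV']
    exact hWone

lemma herm_trace_real {n : Type*} [Fintype n] {M : Matrix n n ℂ} (h : M.IsHermitian) :
    M.trace = ((M.trace.re : ℝ) : ℂ) := by
  have h1 : star M.trace = M.trace := by
    rw [← Matrix.trace_conjTranspose, h.eq]
  exact (Complex.conj_eq_iff_re.1 h1).symm

lemma two_smul_one_sub_one {m : ℕ} :
    (2 : ℂ) • (1 : Matrix (Fin m) (Fin m) ℂ) - 1 = 1 := by
  rw [two_smul]
  abel

/-- `X` is a global minimizer of `E₀` iff its columns are orthonormal (`X*X = I`) and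
`tr[X*HX] = λ₁ + ⋯ + λ_m`. -/
theorem stmt2 {N m : ℕ} (hN : 0 < N) (hm : 0 < m) (hmN : m ≤ N)
    (H : Matrix (Fin N) (Fin N) ℂ) (hH : H.IsHermitian) (hneg : (-H).PosDef)
    (lam : Fin N → ℝ) (hmono : Monotone lam)
    (hchar : H.charpoly = ∏ i : Fin N, (Polynomial.X - Polynomial.C (lam i : ℂ)))
    (X : Matrix (Fin N) (Fin m) ℂ) :
    (∀ Y : Matrix (Fin N) (Fin m) ℂ, E0 H X ≤ E0 H Y) ↔
      (Xᴴ * X = 1 ∧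
        (Xᴴ * H * X).trace = ((∑ i : Fin m, lam (Fin.castLE hmN i) : ℝ) : ℂ)) := by
  classical
  set eig : Fin N → ℝ := hH.eigenvalues with heig
  set U : Matrix (Fin N) (Fin N) ℂ := (hH.eigenvectorUnitary : Matrix (Fin N) (Fin N) ℂ) with hUdef
  set D : Matrix (Fin N) (Fin N) ℂ := Matrix.diagonal (fun i => ((eig i : ℝ) : ℂ)) with hD
  have hUU' : U * Uᴴ = 1 := by
    have := Matrix.mem_unitaryGroup_iff.mp hH.eigenvectorUnitary.2
    rwa [Matrix.star_eq_conjTranspose] at this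
  have hU'U : Uᴴ * U = 1 := by
    have := Matrix.mem_unitaryGroup_iff'.mp hH.eigenvectorUnitary.2
    rwa [Matrix.star_eq_conjTranspose] at this
  have hspec : H = U * D * Uᴴ := by
    have := hH.spectral_theorem
    rwa [Unitary.conjStarAlgAut_apply, Matrix.star_eq_conjTranspose] at this
  -- charpoly comparison gives a permutation
  have hcharD : H.charpoly = ∏ i : Fin N, (Polynomial.X - Polynomial.C ((eig i : ℝ) : ℂ)) := by
    rw [hspec, charpoly_conj_eq U Uᴴ D hUU' hU'U, hD, _root_.charpoly_diagonal]
  obtain ⟨σ, hσ⟩ := exists_perm_of_prod_eq lam eig hmono (hchar.symm.trans hcharD)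
  -- negativity of eigenvalues
  have heig_neg : ∀ i, eig i < 0 := by
    intro i
    have hvne : ⇑(hH.eigenvectorBasis i) ≠ 0 := by
      intro hzero
      refine hH.eigenvectorBasis.orthonormal.ne_zero i ?_
      ext j
      exact congrFun hzero j
    have hpos := hneg.re_dotProduct_pos hvne
    have heq := hH.eigenvalues_eq i
    rw [Matrix.neg_mulVec, dotProduct_neg, map_neg] at hpos
    have : eig i = RCLike.re (dotProduct (star ⇑(hH.eigenvectorBasis i))
        (H *ᵥ ⇑(hH.eigenvectorBasis i))) := heq
    rw [this]
    linarith
  have hlam_neg : ∀ j, lam j < 0 := by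
    intro j
    have := hσ (σ.symm j)
    rw [Equiv.apply_symm_apply] at this
    rw [← this]
    exact heig_neg _
  have hkey := fun Y => E0_key hm hmN H U hH.eigenvectorUnitary.2 eig lam hspec σ hσ hmono
    hlam_neg Y
  set S : ℝ := ∑ k : Fin m, lam (Fin.castLE hmN k) with hS
  -- the minimizing witness
  set Z0 : Matrix (Fin N) (Fin m) ℂ :=
    Matrix.of (fun i k => if σ i = Fin.castLE hmN k then (1 : ℂ) else 0) with hZ0def
  set Y0 : Matrix (Fin N) (Fin m) ℂ := U * Z0 with hY0def
  have hZ0Z0 : Z0ᴴ * Z0 = 1 := by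
    ext k l
    rw [Matrix.mul_apply, Matrix.one_apply]
    simp only [Matrix.conjTranspose_apply, hZ0def, Matrix.of_apply, apply_ite (star : ℂ → ℂ),
      star_one, star_zero]
    have e0 : ∀ i : Fin N, (if σ i = Fin.castLE hmN k then (1:ℂ) else 0) *
        (if σ i = Fin.castLE hmN l then (1:ℂ) else 0)
        = (fun j => (if j = Fin.castLE hmN k then (1:ℂ) else 0) *
            (if j = Fin.castLE hmN l then (1:ℂ) else 0)) (σ i) := fun i => rfl
    rw [Finset.sum_congr rfl fun i _ => e0 i,
      Equiv.sum_comp σ (fun j => (if j = Fin.castLE hmN k then (1:ℂ) else 0) *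
        (if j = Fin.castLE hmN l then (1:ℂ) else 0))]
    simp only [ite_mul, one_mul, zero_mul]
    rw [Finset.sum_ite_eq' Finset.univ (Fin.castLE hmN k)]
    by_cases hkl : k = l
    · subst hkl; simp
    · have : ¬ (Fin.castLE hmN k = Fin.castLE hmN l) := fun h => hkl (Fin.castLE_inj.mp h)
      simp [hkl, this]
  have hY0Y0 : Y0ᴴ * Y0 = 1 := by
    rw [hY0def, Matrix.conjTranspose_mul, Matrix.mul_assoc, ← Matrix.mul_assoc Uᴴ U Z0,
      hU'U, Matrix.one_mul, hZ0Z0]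
  have htrY0 : (Y0ᴴ * H * Y0).trace = ((S : ℝ) : ℂ) := by
    have hform : Y0ᴴ * H * Y0 = Z0ᴴ * D * Z0 := by
      rw [hY0def, hspec, Matrix.conjTranspose_mul]
      calc Z0ᴴ * Uᴴ * (U * D * Uᴴ) * (U * Z0)
          = Z0ᴴ * ((Uᴴ * U) * D * (Uᴴ * U)) * Z0 := by simp only [Matrix.mul_assoc]
        _ = Z0ᴴ * D * Z0 := by rw [hU'U, Matrix.one_mul, Matrix.mul_one]
    rw [hform]
    have hdz : ∀ k : Fin m, (Z0ᴴ * D * Z0) k k = ((lam (Fin.castLE hmN k) : ℝ) : ℂ) := by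
      intro k
      rw [Matrix.mul_assoc, Matrix.mul_apply]
      have he : ∀ i : Fin N, (Z0ᴴ) k i * (D * Z0) i k
          = (fun j => if j = Fin.castLE hmN k then ((lam j : ℝ) : ℂ) else 0) (σ i) := by
        intro i
        simp only [Matrix.conjTranspose_apply, hZ0def, hD, Matrix.diagonal_mul, Matrix.of_apply,
          apply_ite (star : ℂ → ℂ), star_one, star_zero]
        by_cases h : σ i = Fin.castLE hmN k
        · simp [h, hσ i]
        · simp [h]
      rw [Finset.sum_congr rfl fun i _ => he i,
        Equiv.sum_comp σ (fun j => if j = Fin.castLE hmN k then ((lam j : ℝ) : ℂ) else 0),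
        Finset.sum_ite_eq' Finset.univ (Fin.castLE hmN k)]
      simp
    rw [Matrix.trace]
    have : ∀ k : Fin m, (Z0ᴴ * D * Z0).diag k = ((lam (Fin.castLE hmN k) : ℝ) : ℂ) := fun k => hdz k
    rw [Finset.sum_congr rfl fun k _ => this k, hS]
    push_cast
    rfl
  have hE0_of_orth : ∀ Y : Matrix (Fin N) (Fin m) ℂ, Yᴴ * Y = 1 →
      E0 H Y = (Yᴴ * H * Y).trace.re := by
    intro Y hY
    show (((2 : ℂ) • (1 : Matrix (Fin m) (Fin m) ℂ) - Yᴴ * Y) * (Yᴴ * H * Y)).trace.re = _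
    rw [hY, two_smul_one_sub_one, Matrix.one_mul]
  have hE0Y0 : E0 H Y0 = S := by
    rw [hE0_of_orth Y0 hY0Y0, htrY0, Complex.ofReal_re]
  constructor
  · intro hmin
    have hle : E0 H X ≤ S := by rw [← hE0Y0]; exact hmin Y0
    have hge : S ≤ E0 H X := (hkey X).1
    have hEq : E0 H X = S := le_antisymm hle hge
    have hX1 : Xᴴ * X = 1 := (hkey X).2 hEq
    refine ⟨hX1, ?_⟩
    have h1 : E0 H X = (Xᴴ * H * X).trace.re := hE0_of_orth X hX1
    have h2 : (Xᴴ * H * X).trace = (((Xᴴ * H * X).trace.re : ℝ) : ℂ) :=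
      herm_trace_real (Matrix.isHermitian_conjTranspose_mul_mul X hH)
    rw [h2, ← h1, hEq]
  · rintro ⟨hX1, hXtr⟩
    intro Y
    have h1 : E0 H X = S := by
      rw [hE0_of_orth X hX1, hXtr, Complex.ofReal_re]
    rw [h1]
    exact (hkey Y).1
end

section
/- If X ∈ ℂ^{N×m} is a critical point of E₀, then every eigenvalue of the Hermitian matrix X*X belongs to the set {0, 1}. -/
open Matrix
open scoped ComplexOrder

attribute [local instance] Matrix.frobeniusSeminormedAddCommGroup
  Matrix.frobeniusNormedAddCommGroup Matrix.frobeniusNormedSpace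

section Aux

lemma isBBM_mul (k n p : ℕ) : IsBoundedBilinearMap ℝ
    (fun pr : Matrix (Fin k) (Fin n) ℂ × Matrix (Fin n) (Fin p) ℂ => pr.1 * pr.2) where
  add_left := fun a b c => Matrix.add_mul a b c
  smul_left := fun r a b => Matrix.smul_mul r a b
  add_right := fun a b c => Matrix.mul_add a b c
  smul_right := fun r a b => Matrix.mul_smul a r b
  bound := ⟨1, one_pos, fun a b => by simpa using Matrix.frobenius_norm_mul a b⟩

/-- conjTranspose as a real-linear continuous map. -/
noncomputable def ctCLM (k n : ℕ) : Matrix (Fin k) (Fin n) ℂ →L[ℝ] Matrix (Fin n) (Fin k) ℂ :=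
  LinearMap.toContinuousLinearMap
    { toFun := fun X => Xᴴ
      map_add' := fun X Y => Matrix.conjTranspose_add X Y
      map_smul' := fun r X => by
        ext i j
        simp [Matrix.conjTranspose_apply, star_smul] }

@[simp] lemma ctCLM_apply {k n : ℕ} (X : Matrix (Fin k) (Fin n) ℂ) : ctCLM k n X = Xᴴ := rfl

/-- right multiplication by a fixed matrix, as a continuous real-linear map. -/
noncomputable def rmulCLM {k n p : ℕ} (H : Matrix (Fin n) (Fin p) ℂ) :
    Matrix (Fin k) (Fin n) ℂ →L[ℝ] Matrix (Fin k) (Fin p) ℂ :=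
  LinearMap.toContinuousLinearMap
    { toFun := fun Y => Y * H
      map_add' := fun Y Z => Matrix.add_mul Y Z H
      map_smul' := fun r Y => Matrix.smul_mul r Y H }

@[simp] lemma rmulCLM_apply {k n p : ℕ} (H : Matrix (Fin n) (Fin p) ℂ)
    (Y : Matrix (Fin k) (Fin n) ℂ) : rmulCLM H Y = Y * H := rfl

/-- trace as a continuous real-linear map. -/
noncomputable def trCLM (n : ℕ) : Matrix (Fin n) (Fin n) ℂ →L[ℝ] ℂ :=
  LinearMap.toContinuousLinearMap (Matrix.traceLinearMap (Fin n) ℝ ℂ)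

@[simp] lemma trCLM_apply {n : ℕ} (Y : Matrix (Fin n) (Fin n) ℂ) : trCLM n Y = Y.trace := rfl

end Aux

section Deriv

variable {N m : ℕ} (H : Matrix (Fin N) (Fin N) ℂ) (X : Matrix (Fin N) (Fin m) ℂ)

/-- derivative of `Y ↦ Yᴴ * Y` at `X`. -/
noncomputable def D1 : Matrix (Fin N) (Fin m) ℂ →L[ℝ] Matrix (Fin m) (Fin m) ℂ :=
  ((isBBM_mul m N m).deriv (Xᴴ, X)).comp ((ctCLM N m).prod (ContinuousLinearMap.id ℝ _))

/-- derivative of `Y ↦ Yᴴ * H * Y` at `X`. -/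
noncomputable def D2 : Matrix (Fin N) (Fin m) ℂ →L[ℝ] Matrix (Fin m) (Fin m) ℂ :=
  ((isBBM_mul m N m).deriv (Xᴴ * H, X)).comp
    (((rmulCLM H).comp (ctCLM N m)).prod (ContinuousLinearMap.id ℝ _))

/-- full derivative of `E0 H` at `X`. -/
noncomputable def DE : Matrix (Fin N) (Fin m) ℂ →L[ℝ] ℝ :=
  Complex.reCLM.comp <| (trCLM m).comp <|
    (((isBBM_mul m m m).deriv
        ((2 : ℂ) • (1 : Matrix (Fin m) (Fin m) ℂ) - Xᴴ * X, Xᴴ * H * X)).comp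
      (((0 : Matrix (Fin N) (Fin m) ℂ →L[ℝ] Matrix (Fin m) (Fin m) ℂ) - D1 X).prod (D2 H X)))

lemma hasFDerivAt_E0 : HasFDerivAt (E0 H) (DE H X) X := by
  have hct : HasFDerivAt (fun Y : Matrix (Fin N) (Fin m) ℂ => Yᴴ) (ctCLM N m) X :=
    (ctCLM N m).hasFDerivAt
  have hid : HasFDerivAt (fun Y : Matrix (Fin N) (Fin m) ℂ => Y)
      (ContinuousLinearMap.id ℝ _) X := hasFDerivAt_id X
  have hf1 : HasFDerivAt (fun Y : Matrix (Fin N) (Fin m) ℂ => Yᴴ * Y) (D1 X) X := by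
    exact HasFDerivAt.comp (g := fun pr : _ × _ => pr.1 * pr.2) (f := fun Y => (Yᴴ, Y)) X
      ((isBBM_mul m N m).hasFDerivAt (Xᴴ, X)) (hct.prodMk hid)
  have hg : HasFDerivAt
      (fun Y : Matrix (Fin N) (Fin m) ℂ => (2 : ℂ) • (1 : Matrix (Fin m) (Fin m) ℂ) - Yᴴ * Y)
      ((0 : Matrix (Fin N) (Fin m) ℂ →L[ℝ] Matrix (Fin m) (Fin m) ℂ) - D1 X) X := (hasFDerivAt_const _ _).sub hf1
  have hXH : HasFDerivAt (fun Y : Matrix (Fin N) (Fin m) ℂ => Yᴴ * H)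
      ((rmulCLM H).comp (ctCLM N m)) X := ((rmulCLM H).hasFDerivAt).comp X hct
  have hf2 : HasFDerivAt (fun Y : Matrix (Fin N) (Fin m) ℂ => Yᴴ * H * Y) (D2 H X) X := by
    exact HasFDerivAt.comp (g := fun pr : _ × _ => pr.1 * pr.2) (f := fun Y => (Yᴴ * H, Y)) X
      ((isBBM_mul m N m).hasFDerivAt (Xᴴ * H, X)) (hXH.prodMk hid)
  have hprod : HasFDerivAt
      (fun Y : Matrix (Fin N) (Fin m) ℂ =>
        ((2 : ℂ) • (1 : Matrix (Fin m) (Fin m) ℂ) - Yᴴ * Y) * (Yᴴ * H * Y))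
      ((((isBBM_mul m m m).deriv
          ((2 : ℂ) • (1 : Matrix (Fin m) (Fin m) ℂ) - Xᴴ * X, Xᴴ * H * X)).comp
        (((0 : Matrix (Fin N) (Fin m) ℂ →L[ℝ] Matrix (Fin m) (Fin m) ℂ) - D1 X).prod (D2 H X)))) X :=
    by
      exact HasFDerivAt.comp (g := fun pr : _ × _ => pr.1 * pr.2)
        (f := fun Y => ((2 : ℂ) • (1 : Matrix (Fin m) (Fin m) ℂ) - Yᴴ * Y, Yᴴ * H * Y)) X
        ((isBBM_mul m m m).hasFDerivAt _) (hg.prodMk hf2)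
  exact (Complex.reCLM.hasFDerivAt).comp X (((trCLM m).hasFDerivAt).comp X hprod)

lemma DE_apply (D : Matrix (Fin N) (Fin m) ℂ) :
    DE H X D = (((0 : Matrix (Fin m) (Fin m) ℂ) - (Dᴴ * X + Xᴴ * D)) * (Xᴴ * H * X)
      + ((2 : ℂ) • (1 : Matrix (Fin m) (Fin m) ℂ) - Xᴴ * X) * (Dᴴ * H * X + Xᴴ * H * D)).trace.re := by
  change (((2 : ℂ) • (1 : Matrix (Fin m) (Fin m) ℂ) - Xᴴ * X) * (Xᴴ * H * D + Dᴴ * H * X)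
    + ((0 : Matrix (Fin m) (Fin m) ℂ) - (Xᴴ * D + Dᴴ * X)) * (Xᴴ * H * X)).trace.re = _
  simp only [DE, D1, D2, IsBoundedBilinearMap.deriv_apply, ContinuousLinearMap.comp_apply,
    ContinuousLinearMap.prod_apply, ContinuousLinearMap.sub_apply, ContinuousLinearMap.zero_apply, ContinuousLinearMap.neg_apply,
    ctCLM_apply, rmulCLM_apply, trCLM_apply, ContinuousLinearMap.coe_id', id_eq,
    Complex.reCLM_apply, Matrix.add_mul, Matrix.mul_add, Matrix.neg_mul,
    Matrix.sub_mul, trace_add, trace_sub, trace_neg, Complex.add_re, Complex.sub_re,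
    Complex.neg_re, zero_sub, neg_mul, sub_mul]
  ring

end Deriv

lemma star_dot_mulVec {n p : ℕ} (B : Matrix (Fin n) (Fin p) ℂ) (v : Fin n → ℂ)
    (w : Fin p → ℂ) : star v ⬝ᵥ B *ᵥ w = star (Bᴴ *ᵥ v) ⬝ᵥ w := by
  rw [Matrix.dotProduct_mulVec, Matrix.star_mulVec, Matrix.conjTranspose_conjTranspose]

/-- At a critical point `X` of `E₀`, every eigenvalue of `X*X` lies in `{0, 1}`. -/
theorem stmt6 {N m : ℕ} (hN : 0 < N) (hm : 0 < m) (hmN : m ≤ N)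
    (H : Matrix (Fin N) (Fin N) ℂ) (hH : H.IsHermitian) (hneg : (-H).PosDef)
    (X : Matrix (Fin N) (Fin m) ℂ) (hcrit : fderiv ℝ (E0 H) X = 0) :
    ∀ c ∈ spectrum ℂ (Xᴴ * X), c = 0 ∨ c = 1 := by
  intro c hc
  classical
  have hHH : Hᴴ = H := hH
  obtain ⟨S, hSdef⟩ : ∃ S' : Matrix (Fin m) (Fin m) ℂ, S' = Xᴴ * X := ⟨_, rfl⟩
  obtain ⟨A, hAdef⟩ : ∃ A' : Matrix (Fin m) (Fin m) ℂ, A' = Xᴴ * H * X := ⟨_, rfl⟩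
  obtain ⟨T, hTdef⟩ : ∃ T' : Matrix (Fin m) (Fin m) ℂ,
    T' = (2 : ℂ) • (1 : Matrix (Fin m) (Fin m) ℂ) - S := ⟨_, rfl⟩
  obtain ⟨M, hMdef⟩ : ∃ M' : Matrix (Fin N) (Fin m) ℂ, M' = H * X * T - X * A := ⟨_, rfl⟩
  rw [← hSdef] at hc
  have hSH : Sᴴ = S := by rw [hSdef]; exact Matrix.isHermitian_conjTranspose_mul_self X
  have hAH : Aᴴ = A := by
    rw [hAdef]
    simp [Matrix.conjTranspose_mul, Matrix.mul_assoc, hHH]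
  have hTH : Tᴴ = T := by
    rw [hTdef]
    simp [Matrix.conjTranspose_sub, Matrix.conjTranspose_smul, hSH]
  have hMH : Mᴴ = T * (Xᴴ * H) - A * Xᴴ := by
    rw [hMdef]
    simp [Matrix.conjTranspose_sub, Matrix.conjTranspose_mul, hTH, hAH, hHH,
      Matrix.mul_assoc]
  -- the derivative vanishes
  have hDE0 : DE H X = 0 := by
    rw [← (hasFDerivAt_E0 H X).fderiv]; exact hcrit
  -- key trace identity : for every D, re tr(Mᴴ D) = 0
  have key : ∀ D : Matrix (Fin N) (Fin m) ℂ, ((Mᴴ * D).trace).re = 0 := by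
    intro D
    have h : DE H X D = 0 := by rw [hDE0]; rfl
    rw [DE_apply] at h
    have hz2 : (T * (Xᴴ * H * D)).trace - ((Xᴴ * D) * A).trace = (Mᴴ * D).trace := by
      rw [hMH, Matrix.sub_mul, trace_sub, Matrix.mul_assoc T (Xᴴ * H) D,
        trace_mul_comm (Xᴴ * D) A, ← Matrix.mul_assoc A Xᴴ D]
    have hz1 : (T * (Dᴴ * H * X)).trace - ((Dᴴ * X) * A).trace = star ((Mᴴ * D).trace) := by
      have hstz : star ((Mᴴ * D).trace) = (Dᴴ * M).trace := by
        rw [← Matrix.trace_conjTranspose, Matrix.conjTranspose_mul,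
          Matrix.conjTranspose_conjTranspose]
      rw [hstz, hMdef, Matrix.mul_sub, trace_sub]
      congr 1
      · rw [trace_mul_comm, Matrix.mul_assoc Dᴴ H X, ← Matrix.mul_assoc Dᴴ (H * X) T,
          Matrix.mul_assoc Dᴴ (H * X) T]
      · rw [← Matrix.mul_assoc Dᴴ X A]
    have hsplit : (((0 : Matrix (Fin m) (Fin m) ℂ) - (Dᴴ * X + Xᴴ * D)) * (Xᴴ * H * X)
        + ((2 : ℂ) • (1 : Matrix (Fin m) (Fin m) ℂ) - Xᴴ * X) * (Dᴴ * H * X + Xᴴ * H * D)).trace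
        = ((T * (Dᴴ * H * X)).trace - ((Dᴴ * X) * A).trace)
          + ((T * (Xᴴ * H * D)).trace - ((Xᴴ * D) * A).trace) := by
      rw [← hAdef, ← hSdef, ← hTdef]
      simp only [Matrix.add_mul, Matrix.mul_add, Matrix.sub_mul, Matrix.mul_sub,
        Matrix.zero_mul, Matrix.neg_mul, zero_sub, trace_add, trace_sub, trace_neg,
        trace_zero]
      ring
    rw [hsplit, hz1, hz2] at h
    have h2 : (star ((Mᴴ * D).trace) + (Mᴴ * D).trace).re = 0 := by
      simpa using h
    rw [Complex.add_re, Complex.star_def, Complex.conj_re] at h2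
    linarith [h2]
  -- conclude M = 0
  have hM0 : M = 0 := by
    have h := key M
    have htr : ((Mᴴ * M).trace).re = ∑ j, ∑ i, Complex.normSq (M i j) := by
      rw [Matrix.trace, Complex.re_sum]
      refine Finset.sum_congr rfl fun j _ => ?_
      rw [Matrix.diag_apply, Matrix.mul_apply, Complex.re_sum]
      refine Finset.sum_congr rfl fun i _ => ?_
      rw [Matrix.conjTranspose_apply]
      simp only [Complex.normSq_apply, Complex.mul_re, Complex.star_def,
        Complex.conj_re, Complex.conj_im]
      ring
    rw [htr] at h
    have h1 := (Finset.sum_eq_zero_iff_of_nonneg (fun j _ =>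
      Finset.sum_nonneg fun i _ => Complex.normSq_nonneg _)).mp h
    ext i j
    have h2 := (Finset.sum_eq_zero_iff_of_nonneg fun i _ =>
      Complex.normSq_nonneg (M i j)).mp (h1 j (Finset.mem_univ _)) i (Finset.mem_univ _)
    simpa using Complex.normSq_eq_zero.mp h2
  -- the Euler-Lagrange relation  A * T = S * A
  have h1 : H * X * T = X * A := sub_eq_zero.mp (hMdef.symm.trans hM0)
  have hAT : A * T = S * A := by
    have h1' := h1
    simp only [Matrix.mul_assoc] at h1'
    rw [hAdef, hSdef]
    simp only [Matrix.mul_assoc]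
    rw [h1', hAdef]
    simp only [Matrix.mul_assoc]
  -- eigenvector for c
  rw [← AlgEquiv.spectrum_eq (Matrix.toLinAlgEquiv' (R := ℂ) (n := Fin m)),
    ← Module.End.hasEigenvalue_iff_mem_spectrum] at hc
  obtain ⟨v, hv⟩ := hc.exists_hasEigenvector
  have hvne : v ≠ 0 := hv.right
  have hvS : S *ᵥ v = c • v := by
    have h := hv.apply_eq_smul
    rwa [Matrix.toLinAlgEquiv'_apply] at h
  -- c is real
  have hq : (star v ⬝ᵥ v) ≠ 0 := fun h => hvne (dotProduct_star_self_eq_zero.mp h)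
  have hdot : ∀ w : Fin m → ℂ, star v ⬝ᵥ S *ᵥ w = star c * (star v ⬝ᵥ w) := by
    intro w
    rw [star_dot_mulVec, hSH, hvS, star_smul, smul_dotProduct]
    rfl
  have hcreal : star c = c := by
    have h1 : star v ⬝ᵥ S *ᵥ v = star c * (star v ⬝ᵥ v) := hdot v
    rw [hvS, dotProduct_smul] at h1
    exact mul_right_cancel₀ hq (by rw [← h1]; rfl)
  -- the scalar equation
  have heig : (2 - c) * (star v ⬝ᵥ A *ᵥ v) = c * (star v ⬝ᵥ A *ᵥ v) := by
    have e : star v ⬝ᵥ (A * T) *ᵥ v = star v ⬝ᵥ (S * A) *ᵥ v := by rw [hAT]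
    have eL : star v ⬝ᵥ (A * T) *ᵥ v = (2 - c) * (star v ⬝ᵥ A *ᵥ v) := by
      have hTv : T *ᵥ v = (2 - c) • v := by
        rw [hTdef, Matrix.sub_mulVec, Matrix.smul_mulVec, Matrix.one_mulVec, hvS,
          sub_smul]
      rw [← Matrix.mulVec_mulVec, hTv, Matrix.mulVec_smul, dotProduct_smul]
      rfl
    have eR : star v ⬝ᵥ (S * A) *ᵥ v = c * (star v ⬝ᵥ A *ᵥ v) := by
      rw [← Matrix.mulVec_mulVec, hdot (A *ᵥ v), hcreal]
    rw [eL, eR] at e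
    exact e
  have hca : c = 1 ∨ (star v ⬝ᵥ A *ᵥ v) = 0 := by
    by_cases hc1 : c = 1
    · exact Or.inl hc1
    · right
      have h3 : (2 - 2 * c) * (star v ⬝ᵥ A *ᵥ v) = 0 := by linear_combination heig
      rcases mul_eq_zero.mp h3 with h | h
      · exact absurd (by linear_combination -h / 2 : c = 1) hc1
      · exact h
  rcases hca with hc1 | hα
  · exact Or.inr hc1
  · -- α = 0 forces X *ᵥ v = 0, hence c = 0
    have hαval : star v ⬝ᵥ A *ᵥ v = star (X *ᵥ v) ⬝ᵥ H *ᵥ (X *ᵥ v) := by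
      rw [hAdef, ← Matrix.mulVec_mulVec, ← Matrix.mulVec_mulVec, star_dot_mulVec,
        Matrix.conjTranspose_conjTranspose]
    have hu : X *ᵥ v = 0 := by
      by_contra hu
      have hpos := hneg.dotProduct_mulVec_pos hu
      have hz : star (X *ᵥ v) ⬝ᵥ (-H) *ᵥ (X *ᵥ v) = 0 := by
        rw [Matrix.neg_mulVec, dotProduct_neg, ← hαval, hα, neg_zero]
      rw [hz] at hpos
      exact lt_irrefl _ hpos
    have hS0 : S *ᵥ v = 0 := by
      rw [hSdef, ← Matrix.mulVec_mulVec, hu, Matrix.mulVec_zero]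
    rw [hvS] at hS0
    rcases smul_eq_zero.mp hS0 with h | h
    · exact Or.inl h
    · exact absurd h hvne
end

section
/- If X ∈ ℂ^{N×m} is a critical point of E₀, then the column space of X is an invariant subspace of H; in particular, the column space of X is spanned by a set of eigenvectors of H. -/
open Matrix
open scoped ComplexOrder

attribute [local instance] Matrix.frobeniusSeminormedAddCommGroup
  Matrix.frobeniusNormedAddCommGroup Matrix.frobeniusNormedSpace

set_option maxHeartbeats 1000000

lemma mulBBM {a b c : ℕ} : IsBoundedBilinearMap ℝ
    (fun p : Matrix (Fin a) (Fin b) ℂ × Matrix (Fin b) (Fin c) ℂ => p.1 * p.2) where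
  add_left := fun A A' B => Matrix.add_mul A A' B
  smul_left := fun r A B => Matrix.smul_mul r A B
  add_right := fun A B B' => Matrix.mul_add A B B'
  smul_right := fun r A B => Matrix.mul_smul A r B
  bound := ⟨1, one_pos, fun A B => by simpa using Matrix.frobenius_norm_mul A B⟩

noncomputable def ctL {a b : ℕ} : Matrix (Fin a) (Fin b) ℂ →L[ℝ] Matrix (Fin b) (Fin a) ℂ :=
  LinearMap.toContinuousLinearMap
    { toFun := fun A => Aᴴ
      map_add' := fun A B => conjTranspose_add A B
      map_smul' := fun r A => by ext i j; simp [conjTranspose_apply] }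

@[simp] lemma ctL_apply {a b : ℕ} (A : Matrix (Fin a) (Fin b) ℂ) : ctL A = Aᴴ := rfl

noncomputable def ctHL {N m : ℕ} (H : Matrix (Fin N) (Fin N) ℂ) :
    Matrix (Fin N) (Fin m) ℂ →L[ℝ] Matrix (Fin m) (Fin N) ℂ :=
  LinearMap.toContinuousLinearMap
    { toFun := fun A => Aᴴ * H
      map_add' := fun A B => by
        show (A + B)ᴴ * H = _
        rw [conjTranspose_add, Matrix.add_mul]
      map_smul' := fun r A => by
        show ((r • A)ᴴ) * H = r • (Aᴴ * H)
        ext i j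
        simp [conjTranspose_apply, Matrix.mul_apply, Finset.smul_sum, mul_assoc] }

@[simp] lemma ctHL_apply {N m : ℕ} (H : Matrix (Fin N) (Fin N) ℂ)
    (A : Matrix (Fin N) (Fin m) ℂ) : ctHL H A = Aᴴ * H := rfl

noncomputable def trL {m : ℕ} : Matrix (Fin m) (Fin m) ℂ →L[ℝ] ℂ :=
  LinearMap.toContinuousLinearMap (Matrix.traceLinearMap (Fin m) ℝ ℂ)

@[simp] lemma trL_apply {m : ℕ} (A : Matrix (Fin m) (Fin m) ℂ) : trL A = A.trace := rfl

lemma key_deriv {N m : ℕ} (H : Matrix (Fin N) (Fin N) ℂ) (X : Matrix (Fin N) (Fin m) ℂ)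
    (hcrit : fderiv ℝ (E0 H) X = 0) (V : Matrix (Fin N) (Fin m) ℂ) :
    (((((2:ℂ) • (1 : Matrix (Fin m) (Fin m) ℂ) - Xᴴ*X) * (Vᴴ*H*X + Xᴴ*H*V))
      - (Vᴴ*X + Xᴴ*V) * (Xᴴ*H*X)).trace).re = 0 := by
  have hid := hasFDerivAt_id (𝕜 := ℝ) X
  have hq0 := HasFDerivAt.comp (f := fun Y : Matrix (Fin N) (Fin m) ℂ => ((ctHL H) Y, id Y)) X (mulBBM.hasFDerivAt (Xᴴ*H, X)) (HasFDerivAt.prodMk (ctHL H).hasFDerivAt hid)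
  have hq : HasFDerivAt (fun Y : Matrix (Fin N) (Fin m) ℂ => Yᴴ*H*Y)
      ((mulBBM.deriv (Xᴴ*H, X)).comp ((ctHL H).prod (ContinuousLinearMap.id ℝ _))) X := hq0
  have hs0 := HasFDerivAt.comp (f := fun Y : Matrix (Fin N) (Fin m) ℂ => (ctL Y, id Y)) X (mulBBM.hasFDerivAt (Xᴴ, X)) (HasFDerivAt.prodMk ctL.hasFDerivAt hid)
  have hs : HasFDerivAt (fun Y : Matrix (Fin N) (Fin m) ℂ => Yᴴ*Y)
      ((mulBBM.deriv (Xᴴ, X)).comp (ctL.prod (ContinuousLinearMap.id ℝ _))) X := hs0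
  have hg : HasFDerivAt (fun Y : Matrix (Fin N) (Fin m) ℂ =>
      (2:ℂ) • (1 : Matrix (Fin m) (Fin m) ℂ) - Yᴴ*Y)
      (-((mulBBM.deriv (Xᴴ, X)).comp (ctL.prod (ContinuousLinearMap.id ℝ _)))) X :=
    hs.const_sub _
  have hF0 := HasFDerivAt.comp (f := fun Y : Matrix (Fin N) (Fin m) ℂ =>
      ((2:ℂ) • (1 : Matrix (Fin m) (Fin m) ℂ) - Yᴴ*Y, Yᴴ*H*Y)) X
      (mulBBM.hasFDerivAt ((2:ℂ) • (1 : Matrix (Fin m) (Fin m) ℂ) - Xᴴ*X, Xᴴ*H*X)) (hg.prodMk hq)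
  have hF : HasFDerivAt (fun Y : Matrix (Fin N) (Fin m) ℂ =>
      ((2:ℂ) • (1 : Matrix (Fin m) (Fin m) ℂ) - Yᴴ*Y) * (Yᴴ*H*Y))
      ((mulBBM.deriv ((2:ℂ) • (1 : Matrix (Fin m) (Fin m) ℂ) - Xᴴ*X, Xᴴ*H*X)).comp
        ((-((mulBBM.deriv (Xᴴ, X)).comp (ctL.prod (ContinuousLinearMap.id ℝ _)))).prod
          ((mulBBM.deriv (Xᴴ*H, X)).comp ((ctHL H).prod (ContinuousLinearMap.id ℝ _))))) X := hF0
  have hE : HasFDerivAt (E0 H)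
      ((Complex.reCLM.comp trL).comp ((mulBBM.deriv ((2:ℂ) • (1 : Matrix (Fin m) (Fin m) ℂ) - Xᴴ*X, Xᴴ*H*X)).comp
        ((-((mulBBM.deriv (Xᴴ, X)).comp (ctL.prod (ContinuousLinearMap.id ℝ _)))).prod
          ((mulBBM.deriv (Xᴴ*H, X)).comp ((ctHL H).prod (ContinuousLinearMap.id ℝ _)))))) X :=
    (Complex.reCLM.comp trL).hasFDerivAt.comp X hF
  have h0 := hE.fderiv
  rw [hcrit] at h0
  have h1 := congrArg (fun L => L V) h0.symm
  replace h1 : ((((2:ℂ) • (1 : Matrix (Fin m) (Fin m) ℂ) - Xᴴ*X) * (Xᴴ*H*V + Vᴴ*H*X)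
      + (-(Xᴴ*V + Vᴴ*X)) * (Xᴴ*H*X)).trace).re = 0 := h1
  simp only [IsBoundedBilinearMap.deriv_apply, Matrix.sub_mul, Matrix.mul_add, Matrix.add_mul,
    Matrix.mul_assoc, ContinuousLinearMap.comp_apply, ContinuousLinearMap.prod_apply,
    ContinuousLinearMap.neg_apply, ContinuousLinearMap.coe_id', id_eq, ctL_apply, ctHL_apply,
    trL_apply, Complex.reCLM_apply, ContinuousLinearMap.zero_apply, Matrix.trace_sub,
    Matrix.trace_add, Matrix.trace_smul, Matrix.trace_neg, Complex.add_re, Complex.sub_re,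
    Complex.neg_re, Matrix.smul_mul, Matrix.one_mul, Complex.smul_re, Complex.ofReal_re, Matrix.neg_mul, smul_eq_mul, Complex.mul_re,
    Complex.re_ofNat, Complex.im_ofNat] at h1 ⊢
  linarith

lemma eq_zero_of_trace_re {a b : ℕ} (M : Matrix (Fin a) (Fin b) ℂ)
    (h : ((Mᴴ * M).trace).re = 0) : M = 0 := by
  have hsum : ∑ j, ∑ i, Complex.normSq (M i j) = 0 := by
    rw [← h, Matrix.trace]
    simp only [Matrix.diag, Matrix.mul_apply, Matrix.conjTranspose_apply, Complex.re_sum]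
    refine Finset.sum_congr rfl fun j _ => Finset.sum_congr rfl fun i _ => ?_
    rw [Complex.star_def, mul_comm, Complex.mul_conj, Complex.ofReal_re]
  ext i j
  have h1 := (Finset.sum_eq_zero_iff_of_nonneg
    (fun j' _ => Finset.sum_nonneg fun i' _ => Complex.normSq_nonneg (M i' j'))).mp hsum j
    (Finset.mem_univ j)
  have h2 := (Finset.sum_eq_zero_iff_of_nonneg
    (fun i' _ => Complex.normSq_nonneg (M i' j))).mp h1 i (Finset.mem_univ i)
  simpa using Complex.normSq_eq_zero.mp h2

lemma grad_eq {N m : ℕ} (H : Matrix (Fin N) (Fin N) ℂ) (hH : H.IsHermitian)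
    (X : Matrix (Fin N) (Fin m) ℂ) (hcrit : fderiv ℝ (E0 H) X = 0) :
    H * X * ((2:ℂ) • (1 : Matrix (Fin m) (Fin m) ℂ) - Xᴴ*X) = X * (Xᴴ*H*X) := by
  set T : Matrix (Fin m) (Fin m) ℂ := (2:ℂ) • 1 - Xᴴ*X with hTdef
  set Q : Matrix (Fin m) (Fin m) ℂ := Xᴴ*H*X with hQdef
  have hQ : Qᴴ = Q := by
    simp [hQdef, conjTranspose_mul, Matrix.mul_assoc, hH.eq]
  have hT : Tᴴ = T := by
    simp [hTdef, conjTranspose_sub, conjTranspose_smul, conjTranspose_mul]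
  set M : Matrix (Fin N) (Fin m) ℂ := H * X * T - X * Q with hMdef
  have key : ∀ V : Matrix (Fin N) (Fin m) ℂ, ((Vᴴ * M).trace).re = 0 := by
    intro V
    have h0 := key_deriv H X hcrit V
    have e1 : (T * (Vᴴ*H*X)).trace = (Vᴴ * (H*X*T)).trace := by
      rw [Matrix.trace_mul_comm]
      congr 1
      rw [Matrix.mul_assoc, Matrix.mul_assoc, Matrix.mul_assoc]
    have e2 : (T * (Xᴴ*H*V)).trace = star ((Vᴴ * (H*X*T)).trace) := by
      rw [← Matrix.trace_conjTranspose]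
      congr 1
      simp [conjTranspose_mul, Matrix.mul_assoc, hT, hH.eq]
    have e3 : ((Vᴴ*X) * Q).trace = (Vᴴ * (X*Q)).trace := by
      rw [Matrix.mul_assoc]
    have e4 : ((Xᴴ*V) * Q).trace = star ((Vᴴ * (X*Q)).trace) := by
      rw [← Matrix.trace_conjTranspose, Matrix.trace_mul_comm]
      congr 1
      simp [conjTranspose_mul, Matrix.mul_assoc, hQ]
    rw [Matrix.mul_add, Matrix.add_mul, Matrix.trace_sub, Matrix.trace_add, Matrix.trace_add,
      e1, e2, e3, e4] at h0
    have e5 : (Vᴴ * M).trace = (Vᴴ * (H*X*T)).trace - (Vᴴ * (X*Q)).trace := by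
      rw [hMdef, Matrix.mul_sub, Matrix.trace_sub]
    rw [e5]
    simp only [Complex.sub_re, Complex.add_re, Complex.conj_re, Complex.star_def] at h0 ⊢
    linarith
  have hM0 : M = 0 := eq_zero_of_trace_re M (key M)
  have := sub_eq_zero.mp hM0
  exact this


/-- At a critical point `X` of `E₀`, the column space of `X` is an invariant subspace
of `H`; in particular it is spanned by eigenvectors of `H`. -/
theorem stmt7 {N m : ℕ} (hN : 0 < N) (hm : 0 < m) (hmN : m ≤ N)
    (H : Matrix (Fin N) (Fin N) ℂ) (hH : H.IsHermitian) (hneg : (-H).PosDef)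
    (X : Matrix (Fin N) (Fin m) ℂ) (hcrit : fderiv ℝ (E0 H) X = 0) :
    (∀ v ∈ LinearMap.range X.mulVecLin,
      H.mulVec v ∈ LinearMap.range X.mulVecLin) ∧
    ∃ (r : ℕ) (ξ : Fin r → (Fin N → ℂ)),
      (∀ i, ξ i ≠ 0 ∧ ∃ c : ℂ, H.mulVec (ξ i) = c • ξ i) ∧
      LinearMap.range X.mulVecLin = Submodule.span ℂ (Set.range ξ) := by
  set T : Matrix (Fin m) (Fin m) ℂ := (2:ℂ) • 1 - Xᴴ*X with hTdef
  set Q : Matrix (Fin m) (Fin m) ℂ := Xᴴ*H*X with hQdef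
  have heq : H * X * T = X * Q := grad_eq H hH X hcrit
  -- T is invertible
  have hTdet : T.det ≠ 0 := by
    intro hdet
    obtain ⟨u, hu0, hu⟩ := (Matrix.exists_mulVec_eq_zero_iff).mpr hdet
    set w : Fin N → ℂ := X.mulVec u with hw
    set y : Fin N → ℂ := H.mulVec w with hy
    set z : Fin m → ℂ := Xᴴ.mulVec y with hz
    have hXz : X.mulVec z = 0 := by
      have h2 := congrArg (fun A : Matrix (Fin N) (Fin m) ℂ => A.mulVec u) heq
      simp only [hQdef, ← Matrix.mulVec_mulVec] at h2
      rw [hu] at h2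
      simp only [Matrix.mulVec_zero] at h2
      rw [hz, hy, hw]
      exact h2.symm
    have hz0 : z = 0 := by
      rw [← dotProduct_star_self_eq_zero (v := z)]
      have hsz : star z = (star y) ᵥ* X := by
        rw [hz, Matrix.star_mulVec, Matrix.conjTranspose_conjTranspose]
      rw [hsz, ← Matrix.dotProduct_mulVec, hXz, dotProduct_zero]
    have hwHw : dotProduct (star w) (H.mulVec w) = 0 := by
      have hsw : star w = (star u) ᵥ* Xᴴ := by rw [hw, Matrix.star_mulVec]
      rw [← hy, hsw, ← Matrix.dotProduct_mulVec, ← hz, hz0, dotProduct_zero]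
    have hw0 : w = 0 := by
      by_contra hwne
      have hpos := hneg.dotProduct_mulVec_pos hwne
      rw [Matrix.neg_mulVec, dotProduct_neg, hwHw, neg_zero] at hpos
      exact lt_irrefl 0 hpos
    have hSu : (Xᴴ*X).mulVec u = 0 := by
      rw [← Matrix.mulVec_mulVec, ← hw, hw0, Matrix.mulVec_zero]
    have h2u : T.mulVec u = (2:ℂ) • u := by
      rw [hTdef, Matrix.sub_mulVec, hSu, sub_zero, Matrix.smul_mulVec,
        Matrix.one_mulVec]
    rw [hu] at h2u
    exact hu0 (by simpa [eq_comm, smul_eq_zero] using h2u)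
  have hunit : IsUnit T.det := isUnit_iff_ne_zero.mpr hTdet
  have hHX : H * X = X * (Q * T⁻¹) := by
    have h3 := congrArg (fun A : Matrix (Fin N) (Fin m) ℂ => A * T⁻¹) heq
    simpa [Matrix.mul_assoc, Matrix.mul_nonsing_inv T hunit] using h3
  have hinvar : ∀ v ∈ LinearMap.range X.mulVecLin,
      H.mulVec v ∈ LinearMap.range X.mulVecLin := by
    rintro v ⟨a, rfl⟩
    refine ⟨(Q * T⁻¹).mulVec a, ?_⟩
    show X.mulVec ((Q * T⁻¹).mulVec a) = H.mulVec (X.mulVec a)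
    rw [Matrix.mulVec_mulVec, Matrix.mulVec_mulVec, ← hHX]
  refine ⟨hinvar, ?_⟩
  -- spectral part
  set W := LinearMap.range X.mulVecLin with hW
  let e : EuclideanSpace ℂ (Fin N) ≃ₗ[ℂ] (Fin N → ℂ) := WithLp.linearEquiv 2 ℂ (Fin N → ℂ)
  set W' : Submodule ℂ (EuclideanSpace ℂ (Fin N)) := W.comap e.toLinearMap with hW'
  have hEL : ∀ v : EuclideanSpace ℂ (Fin N), e (Matrix.toEuclideanLin H v) = H.mulVec (e v) :=
    fun v => rfl
  have hinv' : ∀ v ∈ W', Matrix.toEuclideanLin H v ∈ W' := by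
    intro v hv
    have : H.mulVec (e v) ∈ W := hinvar (e v) hv
    simpa [hW', Submodule.mem_comap, hEL] using this
  have hsym := (Matrix.isHermitian_iff_isSymmetric.mp hH).restrict_invariant hinv'
  have hb := hsym.eigenvectorBasis (n := Module.finrank ℂ W') rfl
  have hev := fun i => hsym.hasEigenvector_eigenvectorBasis (n := Module.finrank ℂ W') rfl i
  set b := hsym.eigenvectorBasis (n := Module.finrank ℂ W') rfl with hbdef
  refine ⟨Module.finrank ℂ W', fun i => e ((b i : EuclideanSpace ℂ (Fin N))), fun i => ?_, ?_⟩
  · constructor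
    · intro hzero
      have hc : (b i : EuclideanSpace ℂ (Fin N)) = 0 := by
        apply e.injective; simpa using hzero
      exact (hev i).2 (Submodule.coe_eq_zero.mp hc)
    · refine ⟨((hsym.eigenvalues (n := Module.finrank ℂ W') rfl i : ℝ) : ℂ), ?_⟩
      have happ := (hev i).apply_eq_smul
      have h4 : Matrix.toEuclideanLin H (b i : EuclideanSpace ℂ (Fin N))
          = ((hsym.eigenvalues (n := Module.finrank ℂ W') rfl i : ℝ) : ℂ)
            • (b i : EuclideanSpace ℂ (Fin N)) := by
        have h5 := congrArg (Subtype.val) happ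
        simpa using h5
      calc H.mulVec (e (b i : EuclideanSpace ℂ (Fin N)))
          = e (Matrix.toEuclideanLin H (b i : EuclideanSpace ℂ (Fin N))) := (hEL _).symm
        _ = _ := by rw [h4, _root_.map_smul]
  · have h2 : Submodule.map W'.subtype (Submodule.span ℂ (Set.range ⇑b.toBasis)) = W' := by
      rw [b.toBasis.span_eq, Submodule.map_top, Submodule.range_subtype]
    have h3 : Submodule.map (e : EuclideanSpace ℂ (Fin N) →ₗ[ℂ] (Fin N → ℂ)) W' = W :=
      Submodule.map_comap_eq_of_surjective e.surjective W
    have h6 : Submodule.map (e : EuclideanSpace ℂ (Fin N) →ₗ[ℂ] (Fin N → ℂ)) W'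
        = Submodule.map (e : EuclideanSpace ℂ (Fin N) →ₗ[ℂ] (Fin N → ℂ))
          (Submodule.map W'.subtype (Submodule.span ℂ (Set.range ⇑b.toBasis))) :=
      congrArg _ h2.symm
    rw [← h3, h6, Submodule.map_span, Submodule.map_span, Set.image_image, ← Set.range_comp]
    congr 1
end

section
/- Let M = argmin_{X ∈ S₀} ‖X‖₁ be the set of global minimizers of E₀ of minimal entrywise ℓ¹ norm. Then d(S_μ, M) → 0 as μ → 0⁺: for every ε > 0 there exists δ > 0 such that for all μ with 0 < μ < δ and every X ∈ S_μ, inf_{Y ∈ M} ‖X − Y‖_F < ε. -/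
open Matrix
open scoped ComplexOrder

attribute [local instance] Matrix.frobeniusSeminormedAddCommGroup
  Matrix.frobeniusNormedAddCommGroup Matrix.frobeniusNormedSpace

/-- The entrywise ℓ¹ norm `‖X‖₁ = Σ_{i,j} |X_{ij}|`. -/
noncomputable def l1 {N m : ℕ} (X : Matrix (Fin N) (Fin m) ℂ) : ℝ :=
  ∑ i, ∑ j, ‖X i j‖

/-- The penalized OMM functional `E_μ(X) = E₀(X) + μ‖X‖₁`. -/
noncomputable def Emu {N m : ℕ} (H : Matrix (Fin N) (Fin N) ℂ) (μ : ℝ)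
    (X : Matrix (Fin N) (Fin m) ℂ) : ℝ :=
  E0 H X + μ * l1 X

noncomputable def OMMn2 {N : ℕ} (v : Fin N → ℂ) : ℝ := ∑ i, Complex.normSq (v i)

lemma OMMn2_nonneg {N : ℕ} (v : Fin N → ℂ) : 0 ≤ OMMn2 v :=
  Finset.sum_nonneg fun i _ => Complex.normSq_nonneg _

lemma OMMdot_star_self {N : ℕ} (v : Fin N → ℂ) :
    dotProduct (star v) v = (OMMn2 v : ℂ) := by
  simp only [dotProduct, OMMn2, Pi.star_apply, Complex.ofReal_sum]
  refine Finset.sum_congr rfl fun i _ => ?_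
  rw [mul_comm]
  exact Complex.mul_conj (v i)

lemma OMMherm_quad_conj {N : ℕ} {Q : Matrix (Fin N) (Fin N) ℂ} (hQ : Q.IsHermitian)
    (v : Fin N → ℂ) :
    (starRingEnd ℂ) (dotProduct (star v) (Q *ᵥ v)) = dotProduct (star v) (Q *ᵥ v) := by
  have h1 : star (dotProduct (star v) (Q *ᵥ v)) = dotProduct (star (Q *ᵥ v)) v := by
    rw [star_dotProduct]; simp
  rw [show ((starRingEnd ℂ) (dotProduct (star v) (Q *ᵥ v))) =
      star (dotProduct (star v) (Q *ᵥ v)) from rfl, h1, star_mulVec,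
    ← dotProduct_mulVec, hQ.eq]

lemma OMMherm_quad_im {N : ℕ} {Q : Matrix (Fin N) (Fin N) ℂ} (hQ : Q.IsHermitian)
    (v : Fin N → ℂ) : (dotProduct (star v) (Q *ᵥ v)).im = 0 :=
  Complex.conj_eq_iff_im.mp (OMMherm_quad_conj hQ v)

lemma OMMquad_cont {N : ℕ} (P : Matrix (Fin N) (Fin N) ℂ) :
    Continuous fun v : Fin N → ℂ => (dotProduct (star v) (P *ᵥ v)).re := by
  apply Complex.continuous_re.comp
  simp only [dotProduct, mulVec, Pi.star_apply]
  exact continuous_finset_sum _ fun i _ =>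
    (Complex.continuous_conj.comp (continuous_apply i)).mul
      (continuous_finset_sum _ fun j _ => continuous_const.mul (continuous_apply j))

lemma OMMn2_cont {N : ℕ} : Continuous (OMMn2 (N := N)) :=
  continuous_finset_sum _ fun i _ => Complex.continuous_normSq.comp (continuous_apply i)

lemma OMMquad_lb {N : ℕ} (hN : 0 < N) {P : Matrix (Fin N) (Fin N) ℂ} (hP : P.PosDef) :
    ∃ c : ℝ, 0 < c ∧ ∀ v : Fin N → ℂ, c * OMMn2 v ≤ (dotProduct (star v) (P *ᵥ v)).re := by
  set f : (Fin N → ℂ) → ℝ := fun v => (dotProduct (star v) (P *ᵥ v)).re with hf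
  set S : Set (Fin N → ℂ) := {v | OMMn2 v = 1} with hS
  have hSc : IsCompact S := by
    apply Metric.isCompact_of_isClosed_isBounded
    · exact isClosed_eq OMMn2_cont continuous_const
    · apply Bornology.IsBounded.subset (Metric.isBounded_closedBall (x := 0) (r := 1))
      intro v hv
      simp only [Metric.mem_closedBall, dist_zero_right]
      rw [pi_norm_le_iff_of_nonneg zero_le_one]
      intro i
      have h1 : Complex.normSq (v i) ≤ 1 := by
        rw [← hv]
        exact Finset.single_le_sum (fun j _ => Complex.normSq_nonneg _) (Finset.mem_univ i)
      have h2 : ‖v i‖ ^ 2 ≤ 1 := by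
        rw [Complex.sq_norm]; exact h1
      nlinarith [norm_nonneg (v i)]
  have hSne : S.Nonempty := by
    refine ⟨Pi.single ⟨0, hN⟩ 1, ?_⟩
    rw [hS]
    simp only [Set.mem_setOf_eq]
    rw [OMMn2, Finset.sum_eq_single (⟨0, hN⟩ : Fin N)]
    · simp
    · intro b _ hb; simp [Pi.single_apply, hb]
    · simp
  obtain ⟨v₀, hv₀S, hmin⟩ := hSc.exists_isMinOn hSne (OMMquad_cont P).continuousOn
  have hv₀ne : v₀ ≠ 0 := by
    intro h
    rw [hS] at hv₀S
    simp only [Set.mem_setOf_eq, h] at hv₀S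
    simp [OMMn2] at hv₀S
  have hc : 0 < f v₀ := by
    have := hP.dotProduct_mulVec_pos hv₀ne
    rw [Complex.lt_def] at this
    simpa using this.1
  refine ⟨f v₀, hc, fun v => ?_⟩
  rcases eq_or_ne v 0 with rfl | hv
  · have h0 : OMMn2 (0 : Fin N → ℂ) = 0 := by simp [OMMn2]
    rw [h0, mul_zero]
    simp
  · have hn2 : 0 < OMMn2 v := by
      rcases (OMMn2_nonneg v).lt_or_eq with h | h
      · exact h
      · exfalso; apply hv; funext i
        have := (Finset.sum_eq_zero_iff_of_nonneg
          (fun j _ => Complex.normSq_nonneg (v j))).mp h.symm i (Finset.mem_univ i)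
        exact Complex.normSq_eq_zero.mp this
    set r : ℝ := Real.sqrt (OMMn2 v) with hr
    have hrpos : 0 < r := Real.sqrt_pos.mpr hn2
    have hr2 : r ^ 2 = OMMn2 v := Real.sq_sqrt hn2.le
    set w : Fin N → ℂ := (r⁻¹ : ℂ) • v with hw
    have hwS : w ∈ S := by
      rw [hS]
      simp only [Set.mem_setOf_eq, OMMn2, hw, Pi.smul_apply, smul_eq_mul, Complex.normSq_mul]
      rw [← Finset.mul_sum]
      have : Complex.normSq (r⁻¹ : ℂ) = (r ^ 2)⁻¹ := by
        rw [← Complex.ofReal_inv, Complex.normSq_ofReal]; ring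
      rw [this, hr2, show (∑ i, Complex.normSq (v i)) = OMMn2 v from rfl]
      field_simp
    have hvw : v = (r : ℂ) • w := by
      rw [hw, smul_smul]
      have : (r : ℂ) * (r⁻¹ : ℂ) = 1 := by
        rw [← Complex.ofReal_inv, ← Complex.ofReal_mul, mul_inv_cancel₀ hrpos.ne']
        simp
      rw [this, one_smul]
    have hfv : f v = r ^ 2 * f w := by
      simp only [hf]
      simp only [hvw, star_smul, smul_dotProduct, mulVec_smul, dotProduct_smul]
      simp only [star_trivial, Complex.star_def, Complex.conj_ofReal, smul_eq_mul]
      rw [← mul_assoc, ← Complex.ofReal_mul, ← sq, Complex.re_ofReal_mul]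
    rw [show (dotProduct (star v) (P *ᵥ v)).re = f v from rfl, hfv, ← hr2]
    have h1 : f v₀ ≤ f w := hmin hwS
    nlinarith [sq_nonneg r]

lemma OMMabs_mul_abs_le {N : ℕ} (v : Fin N → ℂ) (a b : Fin N) :
    ‖v a‖ * ‖v b‖ ≤ OMMn2 v := by
  have h1 : Complex.normSq (v a) ≤ OMMn2 v :=
    Finset.single_le_sum (fun j _ => Complex.normSq_nonneg (v j)) (Finset.mem_univ a)
  have h2 : Complex.normSq (v b) ≤ OMMn2 v :=
    Finset.single_le_sum (fun j _ => Complex.normSq_nonneg (v j)) (Finset.mem_univ b)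
  nlinarith [Complex.sq_norm (v a), Complex.sq_norm (v b),
    sq_nonneg (‖v a‖ - ‖v b‖),
    norm_nonneg (v a), norm_nonneg (v b)]

lemma OMMquad_ub {N : ℕ} (P : Matrix (Fin N) (Fin N) ℂ) (v : Fin N → ℂ) :
    (dotProduct (star v) (P *ᵥ v)).re ≤ (∑ a, ∑ b, ‖P a b‖) * OMMn2 v := by
  calc (dotProduct (star v) (P *ᵥ v)).re ≤ ‖dotProduct (star v) (P *ᵥ v)‖ :=
        Complex.re_le_norm _
    _ ≤ ∑ a, ‖(starRingEnd ℂ) (v a) * ∑ b, P a b * v b‖ := by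
        simp only [dotProduct, mulVec, Pi.star_apply, Complex.star_def]
        exact norm_sum_le _ _
    _ ≤ ∑ a, ∑ b, ‖P a b‖ * OMMn2 v := by
        apply Finset.sum_le_sum
        intro a _
        rw [norm_mul]
        calc ‖(starRingEnd ℂ) (v a)‖ * ‖∑ b, P a b * v b‖
            ≤ ‖v a‖ * ∑ b, ‖P a b * v b‖ := by
              rw [Complex.norm_conj]
              exact mul_le_mul_of_nonneg_left (norm_sum_le _ _)
                (norm_nonneg _)
          _ = ∑ b, ‖v a‖ * (‖P a b‖ * ‖v b‖) := by
              rw [Finset.mul_sum]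
              refine Finset.sum_congr rfl fun b _ => ?_
              rw [norm_mul]
          _ ≤ ∑ b, ‖P a b‖ * OMMn2 v := by
              apply Finset.sum_le_sum
              intro b _
              have := OMMabs_mul_abs_le v a b
              nlinarith [norm_nonneg (P a b)]
    _ = (∑ a, ∑ b, ‖P a b‖) * OMMn2 v := by rw [Finset.sum_mul]; congr 1; ext a; rw [Finset.sum_mul]

lemma OMMtrace_nonneg {n : ℕ} {M : Matrix (Fin n) (Fin n) ℂ} (h : M.PosSemidef) :
    0 ≤ M.trace := by
  rw [Matrix.trace]
  apply Finset.sum_nonneg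
  intro i _
  have := h.dotProduct_mulVec_nonneg (Pi.single i 1)
  have e : dotProduct (star (Pi.single i 1)) (M *ᵥ Pi.single i 1) = M i i := by
    simp [dotProduct, mulVec, Pi.single_apply, apply_ite, mul_ite, ite_mul]
  rwa [e] at this

open scoped MatrixOrder in
lemma OMMtrace_mul_nonneg {n : ℕ} {A B : Matrix (Fin n) (Fin n) ℂ}
    (hA : A.PosSemidef) (hB : B.PosSemidef) : 0 ≤ (A * B).trace := by
  obtain ⟨S, hs⟩ := CStarAlgebra.nonneg_iff_eq_star_mul_self.mp hA.nonneg
  have h1 : (A * B).trace = (S * B * Sᴴ).trace := by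
    rw [hs, star_eq_conjTranspose, Matrix.mul_assoc, trace_mul_comm]
  rw [h1]
  apply OMMtrace_nonneg
  exact hB.mul_mul_conjTranspose_same S

lemma OMMsingle_quad {n : ℕ} (M : Matrix (Fin n) (Fin n) ℂ) (i : Fin n) :
    dotProduct (star (Pi.single i 1)) (M *ᵥ Pi.single i 1) = M i i := by
  simp [dotProduct, mulVec, Pi.single_apply, apply_ite, mul_ite, ite_mul]

lemma OMMmulVec_single {N m : ℕ} (X : Matrix (Fin N) (Fin m) ℂ) (j : Fin m) :
    X *ᵥ Pi.single j 1 = fun i => X i j := by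
  funext i
  simp [mulVec, dotProduct, Pi.single_apply]

lemma OMMquad_factor {N m : ℕ} (Q : Matrix (Fin N) (Fin N) ℂ)
    (X : Matrix (Fin N) (Fin m) ℂ) (w : Fin m → ℂ) :
    dotProduct (star w) ((Xᴴ * Q * X) *ᵥ w) =
      dotProduct (star (X *ᵥ w)) (Q *ᵥ (X *ᵥ w)) := by
  rw [← mulVec_mulVec, ← mulVec_mulVec, dotProduct_mulVec, ← star_mulVec]

lemma OMMgram_factor {N m : ℕ} (X : Matrix (Fin N) (Fin m) ℂ) (w : Fin m → ℂ) :
    dotProduct (star w) ((Xᴴ * X) *ᵥ w) = dotProduct (star (X *ᵥ w)) (X *ᵥ w) := by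
  rw [← mulVec_mulVec, dotProduct_mulVec, ← star_mulVec]

lemma OMMdiag_form {N m : ℕ} (Q : Matrix (Fin N) (Fin N) ℂ)
    (X : Matrix (Fin N) (Fin m) ℂ) (j : Fin m) :
    (Xᴴ * Q * X) j j = dotProduct (star fun i => X i j) (Q *ᵥ fun i => X i j) := by
  have h := OMMquad_factor Q X (Pi.single j 1)
  rw [OMMsingle_quad, OMMmulVec_single] at h
  exact h

lemma OMMgram_diag {N m : ℕ} (X : Matrix (Fin N) (Fin m) ℂ) (j : Fin m) :
    (Xᴴ * X) j j = ((OMMn2 (fun i => X i j) : ℝ) : ℂ) := by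
  have h := OMMgram_factor X (Pi.single j 1)
  rw [OMMsingle_quad, OMMmulVec_single] at h
  rw [h, OMMdot_star_self]

lemma OMMpsd_shift {N m : ℕ} {P : Matrix (Fin N) (Fin N) ℂ} (hPh : P.IsHermitian)
    {c : ℝ} (hq : ∀ v : Fin N → ℂ, c * OMMn2 v ≤ (dotProduct (star v) (P *ᵥ v)).re)
    (X : Matrix (Fin N) (Fin m) ℂ) :
    (Xᴴ * P * X - (c : ℂ) • (Xᴴ * X)).PosSemidef := by
  refine Matrix.PosSemidef.of_dotProduct_mulVec_nonneg ?_ ?_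
  · show _ᴴ = _
    rw [conjTranspose_sub, conjTranspose_smul,
      (isHermitian_conjTranspose_mul_mul X hPh).eq,
      (isHermitian_conjTranspose_mul_self X).eq]
    norm_num
  · intro w
    rw [Matrix.sub_mulVec, dotProduct_sub, smul_mulVec, dotProduct_smul,
      OMMquad_factor, OMMgram_factor]
    set u : Fin N → ℂ := X *ᵥ w with hu
    rw [OMMdot_star_self, smul_eq_mul, ← Complex.ofReal_mul]
    rw [Complex.le_def]
    constructor
    · simp only [Complex.zero_re, Complex.sub_re, Complex.ofReal_re, sub_nonneg]
      exact hq u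
    · simp only [Complex.zero_im, Complex.sub_im, Complex.ofReal_im,
        OMMherm_quad_im hPh u]
      ring

noncomputable def OMMtS {N m : ℕ} (X : Matrix (Fin N) (Fin m) ℂ) : ℝ :=
  ∑ j, OMMn2 (fun i => X i j)

lemma OMMtS_nonneg {N m : ℕ} (X : Matrix (Fin N) (Fin m) ℂ) : 0 ≤ OMMtS X :=
  Finset.sum_nonneg fun j _ => OMMn2_nonneg _

lemma OMMcoercive {N m : ℕ} (hN : 0 < N) (hm : 0 < m) (H : Matrix (Fin N) (Fin N) ℂ)
    (hneg : (-H).PosDef) :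
    ∃ c C : ℝ, 0 < c ∧ 0 ≤ C ∧ ∀ X : Matrix (Fin N) (Fin m) ℂ,
      (c / m) * (OMMtS X) ^ 2 - 2 * C * OMMtS X ≤ E0 H X := by
  set P : Matrix (Fin N) (Fin N) ℂ := -H with hPdef
  obtain ⟨c, hc, hq⟩ := OMMquad_lb hN hneg
  set C : ℝ := ∑ a, ∑ b, ‖P a b‖ with hCdef
  have hC : 0 ≤ C := Finset.sum_nonneg fun a _ =>
    Finset.sum_nonneg fun b _ => norm_nonneg _
  refine ⟨c, C, hc, hC, fun X => ?_⟩
  set A : Matrix (Fin m) (Fin m) ℂ := Xᴴ * X with hA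
  set B : Matrix (Fin m) (Fin m) ℂ := Xᴴ * P * X with hB
  have hXHX : Xᴴ * H * X = -B := by
    rw [hB, hPdef]
    rw [Matrix.mul_neg, Matrix.neg_mul]
    simp
  -- E0 identity
  have hE : E0 H X = ((A * B).trace).re - 2 * (B.trace).re := by
    rw [E0, hXHX]
    have hmat : ((2 : ℂ) • (1 : Matrix (Fin m) (Fin m) ℂ) - A) * (-B)
        = A * B - (2 : ℂ) • B := by
      rw [Matrix.mul_neg, Matrix.sub_mul, Matrix.smul_mul, Matrix.one_mul, neg_sub]
    rw [hmat, trace_sub, trace_smul, Complex.sub_re]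
    norm_num
  -- split A*B
  have h2 : ((A * B).trace).re
      = ((A * (B - (c : ℂ) • A)).trace).re + c * ((A * A).trace).re := by
    have : A * B = A * (B - (c : ℂ) • A) + (c : ℂ) • (A * A) := by
      rw [Matrix.mul_sub, Matrix.mul_smul]
      abel
    rw [this, trace_add, trace_smul, Complex.add_re, smul_eq_mul, Complex.re_ofReal_mul]
  -- first piece nonneg
  have h1 : 0 ≤ ((A * (B - (c : ℂ) • A)).trace).re := by
    have hpsd := OMMpsd_shift hneg.1 hq X
    have := OMMtrace_mul_nonneg (posSemidef_conjTranspose_mul_self X) hpsd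
    have hre := (Complex.le_def.mp this).1
    simpa using hre
  -- quartic bound
  have h3 : (OMMtS X) ^ 2 / m ≤ ((A * A).trace).re := by
    have hAH : A.IsHermitian := isHermitian_conjTranspose_mul_self X
    have e1 : ((A * A).trace).re = ∑ i, ∑ j, Complex.normSq (A i j) := by
      rw [Matrix.trace, Complex.re_sum]
      refine Finset.sum_congr rfl fun i _ => ?_
      rw [diag_apply, mul_apply, Complex.re_sum]
      refine Finset.sum_congr rfl fun j _ => ?_
      have : A j i = (starRingEnd ℂ) (A i j) := by
        conv_lhs => rw [← hAH.eq]
        rw [conjTranspose_apply]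
        rfl
      rw [this, Complex.mul_conj]
      simp
    have e2 : ∀ i : Fin m, Complex.normSq (A i i) = (OMMn2 fun a => X a i) ^ 2 := by
      intro i
      rw [hA, OMMgram_diag, Complex.normSq_ofReal, sq]
    have e3 : ∑ i, Complex.normSq (A i i) ≤ ∑ i, ∑ j, Complex.normSq (A i j) :=
      Finset.sum_le_sum fun i _ =>
        Finset.single_le_sum (fun j _ => Complex.normSq_nonneg _) (Finset.mem_univ i)
    have e4 : (OMMtS X) ^ 2 ≤ m * ∑ i, (OMMn2 fun a => X a i) ^ 2 := by
      have := sq_sum_le_card_mul_sum_sq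
        (s := (Finset.univ : Finset (Fin m))) (f := fun i => OMMn2 fun a => X a i)
      simpa [OMMtS] using this
    have hmpos : (0 : ℝ) < m := by exact_mod_cast hm
    rw [div_le_iff₀ hmpos, e1]
    calc (OMMtS X) ^ 2 ≤ m * ∑ i, (OMMn2 fun a => X a i) ^ 2 := e4
      _ = (∑ i, Complex.normSq (A i i)) * m := by
          rw [mul_comm]; congr 1; exact Finset.sum_congr rfl fun i _ => (e2 i).symm
      _ ≤ (∑ i, ∑ j, Complex.normSq (A i j)) * m :=
          mul_le_mul_of_nonneg_right e3 hmpos.le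
  -- linear bound
  have h4 : (B.trace).re ≤ C * OMMtS X := by
    rw [Matrix.trace, Complex.re_sum]
    calc ∑ j, ((B.diag) j).re
        ≤ ∑ j, C * OMMn2 (fun i => X i j) := by
          refine Finset.sum_le_sum fun j _ => ?_
          rw [diag_apply, hB, OMMdiag_form]
          exact OMMquad_ub P _
      _ = C * OMMtS X := by rw [OMMtS, Finset.mul_sum]
  have hfin : c * ((OMMtS X) ^ 2 / m) ≤ c * ((A * A).trace).re :=
    mul_le_mul_of_nonneg_left h3 hc.le
  have : (c / m) * (OMMtS X) ^ 2 = c * ((OMMtS X) ^ 2 / m) := by ring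
  linarith [hE, h2, h1, h4, hfin]

lemma OMMcont_entry_mul {α : Type*} [TopologicalSpace α] {n p q : ℕ}
    {f : α → Matrix (Fin n) (Fin p) ℂ} {g : α → Matrix (Fin p) (Fin q) ℂ}
    (hf : ∀ i j, Continuous fun a => f a i j) (hg : ∀ i j, Continuous fun a => g a i j) :
    ∀ i j, Continuous fun a => (f a * g a) i j := by
  intro i j
  simp only [mul_apply]
  exact continuous_finset_sum _ fun k _ => (hf i k).mul (hg k j)

lemma OMMcont_E0 {N m : ℕ} (H : Matrix (Fin N) (Fin N) ℂ) :
    Continuous fun X : Matrix (Fin N) (Fin m) ℂ => E0 H X := by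
  have h1 : ∀ (i : Fin N) (j : Fin m),
      Continuous fun X : Matrix (Fin N) (Fin m) ℂ => X i j :=
    fun i j => continuous_apply_apply i j
  have hct : ∀ (i : Fin m) (j : Fin N),
      Continuous fun X : Matrix (Fin N) (Fin m) ℂ => Xᴴ i j := by
    intro i j
    simp only [conjTranspose_apply]
    exact continuous_star.comp (h1 j i)
  have hXX := OMMcont_entry_mul hct h1
  have hXH := OMMcont_entry_mul hct
    (fun (i : Fin N) (j : Fin N) =>
      (continuous_const : Continuous fun _ : Matrix (Fin N) (Fin m) ℂ => H i j))
  have hXHX := OMMcont_entry_mul hXH h1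
  have hL : ∀ i j, Continuous fun X : Matrix (Fin N) (Fin m) ℂ =>
      ((2 : ℂ) • (1 : Matrix (Fin m) (Fin m) ℂ) - Xᴴ * X) i j := by
    intro i j
    simp only [Matrix.sub_apply]
    exact continuous_const.sub (hXX i j)
  have hprod := OMMcont_entry_mul hL hXHX
  have : Continuous fun X : Matrix (Fin N) (Fin m) ℂ =>
      (((2 : ℂ) • (1 : Matrix (Fin m) (Fin m) ℂ) - Xᴴ * X) * (Xᴴ * H * X)).trace :=
    continuous_finset_sum _ fun k _ => hprod k k
  unfold E0
  exact Complex.continuous_re.comp this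

lemma OMMcont_l1 {N m : ℕ} : Continuous (l1 (N := N) (m := m)) :=
  continuous_finset_sum _ fun i _ => continuous_finset_sum _ fun j _ =>
    continuous_norm.comp (continuous_apply_apply i j)

lemma OMMcont_tS {N m : ℕ} : Continuous (OMMtS (N := N) (m := m)) :=
  continuous_finset_sum _ fun j _ => OMMn2_cont.comp
    (continuous_pi fun i => continuous_apply_apply i j)

lemma OMMl1_nonneg {N m : ℕ} (X : Matrix (Fin N) (Fin m) ℂ) : 0 ≤ l1 X :=
  Finset.sum_nonneg fun i _ => Finset.sum_nonneg fun j _ => norm_nonneg _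

lemma OMMnorm_eq_sqrt_tS {N m : ℕ} (X : Matrix (Fin N) (Fin m) ℂ) :
    ‖X‖ = Real.sqrt (OMMtS X) := by
  rw [frobenius_norm_def, Real.sqrt_eq_rpow]
  congr 1
  rw [OMMtS, Finset.sum_comm]
  refine Finset.sum_congr rfl fun i _ => ?_
  rw [OMMn2]
  refine Finset.sum_congr rfl fun j _ => ?_
  rw [show ((2 : ℝ) : ℝ) = ((2 : ℕ) : ℝ) by norm_num, Real.rpow_natCast,
    Complex.sq_norm]

lemma OMMcompact_sublevel {N m : ℕ} (hN : 0 < N) (hm : 0 < m)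
    (H : Matrix (Fin N) (Fin N) ℂ) (hneg : (-H).PosDef) :
    IsCompact {X : Matrix (Fin N) (Fin m) ℂ | E0 H X ≤ 0} := by
  obtain ⟨c, C, hc, hC, hco⟩ := OMMcoercive hN hm H hneg
  apply Metric.isCompact_of_isClosed_isBounded
  · exact isClosed_le (OMMcont_E0 H) continuous_const
  · set R : ℝ := 2 * C * m / c + 1 with hR
    have hRpos : 0 < R := by positivity
    apply Bornology.IsBounded.subset (Metric.isBounded_closedBall (x := 0) (r := Real.sqrt R))
    intro X hX
    simp only [Set.mem_setOf_eq] at hX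
    have htle : OMMtS X ≤ R := by
      by_contra hcon
      push_neg at hcon
      have ht0 : 0 < OMMtS X := hRpos.trans hcon
      have h1 := hco X
      have hmpos : (0 : ℝ) < m := by exact_mod_cast hm
      have h2 : 2 * C * m / c < OMMtS X := by
        rw [hR] at hcon; linarith
      have h3 : 2 * C * m < OMMtS X * c := (div_lt_iff₀ hc).mp h2
      have h4 : 0 < c * (OMMtS X) ^ 2 - 2 * C * OMMtS X * m := by nlinarith [ht0]
      have key : 0 < (c / m) * (OMMtS X) ^ 2 - 2 * C * OMMtS X := by
        have heq : (c / m) * (OMMtS X) ^ 2 - 2 * C * OMMtS X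
            = (c * (OMMtS X) ^ 2 - 2 * C * OMMtS X * m) / m := by
          field_simp
        rw [heq]
        exact div_pos h4 hmpos
      linarith [hX]
    simp only [Metric.mem_closedBall, dist_zero_right]
    rw [OMMnorm_eq_sqrt_tS]
    exact Real.sqrt_le_sqrt htle


/-- As `μ → 0⁺`, the minimizers of `E_μ` converge (in Frobenius distance) to the set
`M` of global minimizers of `E₀` of minimal entrywise ℓ¹ norm. -/
theorem stmt11 {N m : ℕ} (hN : 0 < N) (hm : 0 < m) (hmN : m ≤ N)
    (H : Matrix (Fin N) (Fin N) ℂ) (hH : H.IsHermitian) (hneg : (-H).PosDef) :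
    ∀ ε > (0 : ℝ), ∃ δ > (0 : ℝ), ∀ μ : ℝ, 0 < μ → μ < δ →
      ∀ X ∈ {X : Matrix (Fin N) (Fin m) ℂ | ∀ Z : Matrix (Fin N) (Fin m) ℂ, Emu H μ X ≤ Emu H μ Z},
        Metric.infDist X
          {Y : Matrix (Fin N) (Fin m) ℂ | (∀ Z : Matrix (Fin N) (Fin m) ℂ, E0 H Y ≤ E0 H Z) ∧
            ∀ W : Matrix (Fin N) (Fin m) ℂ, (∀ Z : Matrix (Fin N) (Fin m) ℂ, E0 H W ≤ E0 H Z) → l1 Y ≤ l1 W}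
          < ε := by
  intro ε hε
  by_contra hcon
  push_neg at hcon
  set Mset : Set (Matrix (Fin N) (Fin m) ℂ) :=
    {Y | (∀ Z : Matrix (Fin N) (Fin m) ℂ, E0 H Y ≤ E0 H Z) ∧
      ∀ W : Matrix (Fin N) (Fin m) ℂ, (∀ Z : Matrix (Fin N) (Fin m) ℂ, E0 H W ≤ E0 H Z) →
        l1 Y ≤ l1 W} with hMset
  have hseq : ∀ n : ℕ, ∃ μ : ℝ, ∃ X : Matrix (Fin N) (Fin m) ℂ,
      0 < μ ∧ μ < 1 / (n + 1) ∧ (∀ Z : Matrix (Fin N) (Fin m) ℂ, Emu H μ X ≤ Emu H μ Z) ∧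
      ε ≤ Metric.infDist X Mset := by
    intro n
    obtain ⟨μ, hμ1, hμ2, X, hXmin, hXd⟩ := hcon (1 / (n + 1)) (by positivity)
    exact ⟨μ, X, hμ1, hμ2, hXmin, hXd⟩
  choose μs Xs hμpos hμlt hXmin hXd using hseq
  have hE00 : E0 H (0 : Matrix (Fin N) (Fin m) ℂ) = 0 := by simp [E0]
  have hl10 : l1 (0 : Matrix (Fin N) (Fin m) ℂ) = 0 := by simp [l1]
  have hE0le : ∀ n, Xs n ∈ {X : Matrix (Fin N) (Fin m) ℂ | E0 H X ≤ 0} := by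
    intro n
    have h := hXmin n 0
    simp only [Emu, hE00, hl10, mul_zero, add_zero] at h
    have hl := mul_nonneg (hμpos n).le (OMMl1_nonneg (Xs n))
    simp only [Set.mem_setOf_eq]
    linarith
  haveI : FirstCountableTopology (Matrix (Fin N) (Fin m) ℂ) :=
    inferInstanceAs (FirstCountableTopology (Fin N → Fin m → ℂ))
  obtain ⟨Xb, hXbK, φ, hφmono, htend⟩ :=
    (OMMcompact_sublevel hN hm H hneg).tendsto_subseq hE0le
  have hμ0 : Filter.Tendsto (fun n => μs (φ n)) Filter.atTop (nhds 0) := by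
    apply squeeze_zero (fun n => (hμpos _).le) (g := fun n : ℕ => 1 / (n + 1 : ℝ))
    · intro n
      have h1 : μs (φ n) < 1 / (φ n + 1 : ℝ) := hμlt (φ n)
      have h2 : (1 : ℝ) / (φ n + 1) ≤ 1 / (n + 1) := by
        apply one_div_le_one_div_of_le (by positivity)
        have : (n : ℝ) ≤ (φ n : ℝ) := by exact_mod_cast hφmono.le_apply
        linarith
      linarith
    · exact tendsto_one_div_add_atTop_nhds_zero_nat
  have hmem : Xb ∈ Mset := by
    constructor
    · intro Z
      have hlim1 : Filter.Tendsto (fun n => E0 H (Xs (φ n))) Filter.atTop (nhds (E0 H Xb)) :=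
        ((OMMcont_E0 H).tendsto Xb).comp htend
      have hlim2 : Filter.Tendsto (fun n => E0 H Z + μs (φ n) * l1 Z) Filter.atTop
          (nhds (E0 H Z)) := by
        have := Filter.Tendsto.const_add (E0 H Z) ((hμ0.mul_const (l1 Z)))
        simpa using this
      refine le_of_tendsto_of_tendsto' hlim1 hlim2 fun n => ?_
      have h := hXmin (φ n) Z
      have hl := mul_nonneg (hμpos (φ n)).le (OMMl1_nonneg (Xs (φ n)))
      simp only [Emu] at h
      linarith
    · intro W hW
      have hlim1 : Filter.Tendsto (fun n => l1 (Xs (φ n))) Filter.atTop (nhds (l1 Xb)) :=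
        (OMMcont_l1.tendsto Xb).comp htend
      refine le_of_tendsto hlim1 (Filter.Eventually.of_forall fun n => ?_)
      have h := hXmin (φ n) W
      have h2 := hW (Xs (φ n))
      simp only [Emu] at h
      have hμ := hμpos (φ n)
      have h3 : μs (φ n) * l1 (Xs (φ n)) ≤ μs (φ n) * l1 W := by linarith
      exact (mul_le_mul_iff_right₀ hμ).mp h3
  have hzero : Metric.infDist Xb Mset = 0 := Metric.infDist_zero_of_mem hmem
  have hge : ε ≤ Metric.infDist Xb Mset := by
    have hcontd : Filter.Tendsto (fun n => Metric.infDist (Xs (φ n)) Mset) Filter.atTop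
        (nhds (Metric.infDist Xb Mset)) :=
      ((Metric.continuous_infDist_pt Mset).tendsto Xb).comp htend
    exact ge_of_tendsto hcontd (Filter.Eventually.of_forall fun n => hXd (φ n))
  rw [hzero] at hge
  linarith
end

section
/- For every μ > 0, the zero matrix is a strict local minimizer of E_μ: there exists r > 0 such that E_μ(X) > E_μ(0) = 0 for every X ∈ ℂ^{N×m} with 0 < ‖X‖_F < r. -/
open Matrix
open scoped ComplexOrder

attribute [local instance] Matrix.frobeniusSeminormedAddCommGroup
  Matrix.frobeniusNormedAddCommGroup Matrix.frobeniusNormedSpace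

lemma norm_le_l1' {N m : ℕ} (X : Matrix (Fin N) (Fin m) ℂ) : ‖X‖ ≤ l1 X := by
  rw [Matrix.frobenius_norm_def]
  have h1 : ∀ (i : Fin N) (j : Fin m), ‖X i j‖ ^ (2:ℝ) = ‖X i j‖ ^ 2 := fun i j => by
    rw [← Real.rpow_natCast (‖X i j‖) 2]; norm_num
  simp_rw [h1]
  have hnn : (0:ℝ) ≤ ∑ i, ∑ j, ‖X i j‖ :=
    Finset.sum_nonneg fun _ _ => Finset.sum_nonneg fun _ _ => norm_nonneg _
  have h2 : ∑ i, ∑ j, ‖X i j‖^2 ≤ (∑ i, ∑ j, ‖X i j‖)^2 := by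
    calc ∑ i, ∑ j, ‖X i j‖^2 = ∑ p : Fin N × Fin m, ‖X p.1 p.2‖^2 := by
          rw [Fintype.sum_prod_type]
      _ ≤ (∑ p : Fin N × Fin m, ‖X p.1 p.2‖)^2 :=
          Finset.sum_sq_le_sq_sum_of_nonneg (fun _ _ => norm_nonneg _)
      _ = (∑ i, ∑ j, ‖X i j‖)^2 := by rw [Fintype.sum_prod_type]
  have h3 : (∑ i, ∑ j, ‖X i j‖^2) ^ (1/2:ℝ) ≤ ((∑ i, ∑ j, ‖X i j‖)^2) ^ (1/2:ℝ) :=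
    Real.rpow_le_rpow (Finset.sum_nonneg fun _ _ => Finset.sum_nonneg fun _ _ => sq_nonneg _)
      h2 (by norm_num)
  have h4 : ((∑ i, ∑ j, ‖X i j‖)^2) ^ (1/2:ℝ) = ∑ i, ∑ j, ‖X i j‖ := by
    rw [← Real.sqrt_eq_rpow, Real.sqrt_sq hnn]
  rw [h4] at h3
  refine h3.trans_eq ?_
  simp [l1]

lemma entry_le' {a b : ℕ} (M : Matrix (Fin a) (Fin b) ℂ) (i : Fin a) (j : Fin b) :
    ‖M i j‖ ≤ ‖M‖ := by
  rw [Matrix.frobenius_norm_def]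
  have h : ‖M i j‖ ^ (2:ℝ) ≤ ∑ i, ∑ j, ‖M i j‖ ^ (2:ℝ) := by
    have h1 : ‖M i j‖ ^ (2:ℝ) ≤ ∑ j', ‖M i j'‖ ^ (2:ℝ) :=
      Finset.single_le_sum (fun j' _ => Real.rpow_nonneg (norm_nonneg _) _) (Finset.mem_univ j)
    exact h1.trans (Finset.single_le_sum (fun i' _ =>
      Finset.sum_nonneg fun j' _ => Real.rpow_nonneg (norm_nonneg _) _) (Finset.mem_univ i))
  calc ‖M i j‖ = (‖M i j‖ ^ (2:ℝ)) ^ (1/2:ℝ) := by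
        rw [Real.rpow_two, ← Real.sqrt_eq_rpow, Real.sqrt_sq (norm_nonneg _)]
    _ ≤ (∑ i, ∑ j, ‖M i j‖ ^ (2:ℝ)) ^ (1/2:ℝ) :=
        Real.rpow_le_rpow (Real.rpow_nonneg (norm_nonneg _) _) h (by norm_num)

lemma trace_re_abs_le {a : ℕ} (M : Matrix (Fin a) (Fin a) ℂ) :
    |M.trace.re| ≤ a * ‖M‖ := by
  have h1 : |M.trace.re| ≤ ‖M.trace‖ := Complex.abs_re_le_norm _
  have h2 : ‖M.trace‖ ≤ ∑ i, ‖M i i‖ := by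
    rw [Matrix.trace]
    exact norm_sum_le _ _
  have h3 : ∑ i, ‖M i i‖ ≤ ∑ _i : Fin a, ‖M‖ :=
    Finset.sum_le_sum fun i _ => entry_le' M i i
  simp only [Finset.sum_const, Finset.card_univ, Fintype.card_fin, nsmul_eq_mul] at h3
  exact h1.trans (h2.trans h3)


/-- For every `μ > 0`, the zero matrix is a strict local minimizer of `E_μ`:
`E_μ(X) > E_μ(0) = 0` for all `X` with `0 < ‖X‖_F < r`, for some `r > 0`. -/
theorem stmt19 {N m : ℕ} (hN : 0 < N) (hm : 0 < m) (hmN : m ≤ N)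
    (H : Matrix (Fin N) (Fin N) ℂ) (hH : H.IsHermitian) (hneg : (-H).PosDef)
    (μ : ℝ) (hμ : 0 < μ) :
    ∃ r > (0 : ℝ), Emu H μ (0 : Matrix (Fin N) (Fin m) ℂ) = 0 ∧
      ∀ X : Matrix (Fin N) (Fin m) ℂ, 0 < ‖X‖ → ‖X‖ < r →
        Emu H μ (0 : Matrix (Fin N) (Fin m) ℂ) < Emu H μ X := by

  set C : ℝ := m * (2 * ‖(1 : Matrix (Fin m) (Fin m) ℂ)‖ + 1) * ‖H‖ with hC
  have hC0 : 0 ≤ C := by positivity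
  refine ⟨min 1 (μ / (C + 1)), lt_min one_pos (div_pos hμ (by linarith)), ?_, ?_⟩
  · simp [Emu, E0, l1]
  · intro X hX0 hXr
    have hX1 : ‖X‖ ≤ 1 := le_of_lt (lt_of_lt_of_le hXr (min_le_left _ _))
    have hXμ : ‖X‖ < μ / (C + 1) := lt_of_lt_of_le hXr (min_le_right _ _)
    have hE00 : Emu H μ (0 : Matrix (Fin N) (Fin m) ℂ) = 0 := by simp [Emu, E0, l1]
    rw [hE00]
    -- bound E0
    set A : Matrix (Fin m) (Fin m) ℂ := (2 : ℂ) • (1 : Matrix (Fin m) (Fin m) ℂ) - Xᴴ * X with hA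
    set B : Matrix (Fin m) (Fin m) ℂ := Xᴴ * H * X with hB
    have hXc : ‖Xᴴ‖ = ‖X‖ := Matrix.frobenius_norm_conjTranspose X
    have hnA : ‖A‖ ≤ 2 * ‖(1 : Matrix (Fin m) (Fin m) ℂ)‖ + 1 := by
      calc ‖A‖ ≤ ‖(2 : ℂ) • (1 : Matrix (Fin m) (Fin m) ℂ)‖ + ‖Xᴴ * X‖ := norm_sub_le _ _
        _ ≤ 2 * ‖(1 : Matrix (Fin m) (Fin m) ℂ)‖ + ‖Xᴴ‖ * ‖X‖ := by
            rw [norm_smul]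
            gcongr
            · simp
            · exact Matrix.frobenius_norm_mul _ _
        _ ≤ 2 * ‖(1 : Matrix (Fin m) (Fin m) ℂ)‖ + 1 := by
            rw [hXc]
            have : ‖X‖ * ‖X‖ ≤ 1 * 1 := mul_le_mul hX1 hX1 (norm_nonneg _) zero_le_one
            linarith
    have hnB : ‖B‖ ≤ ‖H‖ * (‖X‖ * ‖X‖) := by
      calc ‖B‖ ≤ ‖Xᴴ * H‖ * ‖X‖ := Matrix.frobenius_norm_mul _ _
        _ ≤ ‖Xᴴ‖ * ‖H‖ * ‖X‖ := by
            gcongr; exact Matrix.frobenius_norm_mul _ _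
        _ = ‖H‖ * (‖X‖ * ‖X‖) := by rw [hXc]; ring
    have hE0 : |E0 H X| ≤ C * (‖X‖ * ‖X‖) := by
      have h1 : |E0 H X| ≤ m * ‖A * B‖ := trace_re_abs_le (A * B)
      have h2 : ‖A * B‖ ≤ ‖A‖ * ‖B‖ := Matrix.frobenius_norm_mul _ _
      have h3 : ‖A‖ * ‖B‖ ≤ (2 * ‖(1 : Matrix (Fin m) (Fin m) ℂ)‖ + 1) * (‖H‖ * (‖X‖ * ‖X‖)) :=
        mul_le_mul hnA hnB (norm_nonneg _) (by positivity)
      calc |E0 H X| ≤ m * (‖A‖ * ‖B‖) := h1.trans (by gcongr)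
        _ ≤ m * ((2 * ‖(1 : Matrix (Fin m) (Fin m) ℂ)‖ + 1) * (‖H‖ * (‖X‖ * ‖X‖))) := by
            gcongr
        _ = C * (‖X‖ * ‖X‖) := by rw [hC]; ring
    have hl1 : ‖X‖ ≤ l1 X := norm_le_l1' X
    have hlow : -(C * (‖X‖ * ‖X‖)) ≤ E0 H X := neg_le_of_abs_le hE0
    have key : 0 < E0 H X + μ * l1 X := by
      have h5 : C * ‖X‖ < μ := by
        have := (lt_div_iff₀ (show (0:ℝ) < C + 1 by linarith)).mp hXμ
        nlinarith [norm_nonneg X]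
      nlinarith
    exact key
end
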